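/- arXiv:2104.06592 — 3 statements merged into one kernel-verified Lean document; each statement's English description precedes it below -/
import Mathlib

section
/- For $s \in (-d/2, d/2)$ and functions $f_1, f_2, f_3 \in H^{(s+d)/3}(\mathbb{T}^d)$, the product satisfies $\| f_1 f_2 f_3 \|_{H^s(\mathbb{T}^d)} \lesssim \prod_{j=1}^3 \| f_j \|_{H^{(s+d)/3}(\mathbb{T}^d)}$. -/
open scoped ENNReal

/-- Japanese bracket weight `⟨ξ⟩^{2s} = (1 + |ξ|²)^s` for `ξ ∈ ℤᵈ`. -/
noncomputable def sobWeight {d : ℕ} (s : ℝ) (ξ : Fin d → ℤ) : ℝ :=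
  (1 + ∑ i, ((ξ i : ℝ)) ^ 2) ^ s

/-- The `Hˢ(𝕋ᵈ)` norm via Fourier coefficients, valued in `ℝ≥0∞`. -/
noncomputable def sobNorm (d : ℕ) (s : ℝ) (f : (Fin d → ℤ) → ℂ) : ℝ≥0∞ :=
  (∑' ξ : Fin d → ℤ, ENNReal.ofReal (sobWeight s ξ * ‖f ξ‖ ^ 2)) ^ (1/2 : ℝ)

/-- Fourier coefficients of the product `f₁ f₂ f₃` on `𝕋ᵈ`: the triple convolution. -/
noncomputable def tripleProd (d : ℕ) (f₁ f₂ f₃ : (Fin d → ℤ) → ℂ) :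
    (Fin d → ℤ) → ℂ :=
  fun ξ => ∑' p : (Fin d → ℤ) × (Fin d → ℤ),
    f₁ p.1 * f₂ p.2 * f₃ (ξ - p.1 - p.2)

namespace TriProd

variable {d : ℕ}

/-- The real weight `1 + |x|²`. -/
noncomputable def Wr (x : Fin d → ℤ) : ℝ := 1 + ∑ i, ((x i : ℝ)) ^ 2

lemma one_le_Wr (x : Fin d → ℤ) : 1 ≤ Wr x := by
  have : (0:ℝ) ≤ ∑ i, ((x i : ℝ)) ^ 2 := Finset.sum_nonneg fun i _ => sq_nonneg _
  simp [Wr]; linarith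

lemma Wr_pos (x : Fin d → ℤ) : 0 < Wr x := lt_of_lt_of_le one_pos (one_le_Wr x)

lemma Wr_neg (x : Fin d → ℤ) : Wr (-x) = Wr x := by
  simp [Wr]

/-- The weight `(1+|x|²)^t` as an extended nonneg real. -/
noncomputable def wt (t : ℝ) (x : Fin d → ℤ) : ℝ≥0∞ := ENNReal.ofReal (Wr x ^ t)

lemma wt_ne_top (t : ℝ) (x : Fin d → ℤ) : wt t x ≠ ⊤ := ENNReal.ofReal_ne_top

lemma wt_zero (x : Fin d → ℤ) : wt 0 x = 1 := by simp [wt]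

lemma wt_mul (a b : ℝ) (x : Fin d → ℤ) : wt a x * wt b x = wt (a+b) x := by
  rw [wt, wt, wt, Real.rpow_add (Wr_pos x), ENNReal.ofReal_mul (Real.rpow_nonneg (Wr_pos x).le _)]

/-- the L²-type norm of an `ℝ≥0∞`-valued sequence -/
noncomputable def nrm (F : (Fin d → ℤ) → ℝ≥0∞) : ℝ≥0∞ := (∑' x, F x ^ 2) ^ (1/2 : ℝ)

lemma nrm_comp_neg (F : (Fin d → ℤ) → ℝ≥0∞) : nrm (fun x => F (-x)) = nrm F := by
  unfold nrm
  congr 1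
  exact (Equiv.neg (Fin d → ℤ)).tsum_eq (fun x => F x ^ 2)

/-- Cauchy–Schwarz for `ℝ≥0∞`-valued tsums. -/
lemma tsum_mul_le_sq {α : Type*} (f g : α → ℝ≥0∞) :
    ∑' a, f a * g a ≤ (∑' a, f a ^ 2) ^ (1/2:ℝ) * (∑' a, g a ^ 2) ^ (1/2:ℝ) := by
  letI : MeasurableSpace α := ⊤
  haveI : MeasurableSingletonClass α := ⟨fun _ => trivial⟩
  have hconj : Real.HolderConjugate 2 2 := ⟨by norm_num, by norm_num, by norm_num⟩
  have hf : AEMeasurable f (MeasureTheory.Measure.count) := (Measurable.of_discrete).aemeasurable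
  have hg : AEMeasurable g (MeasureTheory.Measure.count) := (Measurable.of_discrete).aemeasurable
  have h := ENNReal.lintegral_mul_le_Lp_mul_Lq (MeasureTheory.Measure.count) hconj hf hg
  simp only [MeasureTheory.lintegral_count, Pi.mul_apply] at h
  have h2 : ∀ x : ℝ≥0∞, x ^ (2:ℝ) = x ^ 2 := fun x => by
    rw [show (2:ℝ) = ((2:ℕ):ℝ) by norm_num, ENNReal.rpow_natCast]
  simpa [h2] using h

/-- Lattice point count: the number of `x` with `Wr x ≤ L` is at most `3^d L^{d/2}`. -/
lemma count_le (L : ℝ) (hL : 1 ≤ L) :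
    ∑' x : Fin d → ℤ, (if Wr x ≤ L then (1:ℝ≥0∞) else 0)
      ≤ ENNReal.ofReal ((3:ℝ)^d * L ^ ((d:ℝ)/2)) := by
  classical
  set m : ℕ := ⌊Real.sqrt L⌋₊ with hm
  set B : Finset (Fin d → ℤ) := Fintype.piFinset (fun _ : Fin d => Finset.Icc (-(m:ℤ)) (m:ℤ)) with hB
  have hsupp : ∀ x : Fin d → ℤ, x ∉ B → (if Wr x ≤ L then (1:ℝ≥0∞) else 0) = 0 := by
    intro x hx
    rw [if_neg]
    intro hWx
    apply hx
    rw [hB, Fintype.mem_piFinset]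
    intro i
    have h1 : ((x i : ℝ))^2 ≤ L - 1 := by
      have hs : ((x i : ℝ))^2 ≤ ∑ j, ((x j : ℝ))^2 :=
        Finset.single_le_sum (f := fun j => ((x j : ℝ))^2) (fun j _ => sq_nonneg _)
          (Finset.mem_univ i)
      have hw := hWx
      rw [Wr] at hw
      linarith
    have h2 : |(x i : ℝ)| ≤ Real.sqrt L := by
      rw [← Real.sqrt_sq_eq_abs]
      exact Real.sqrt_le_sqrt (by linarith)
    have h3 : |x i| ≤ (m : ℤ) := by
      by_contra hc
      push_neg at hc
      have hc2 : ((m:ℝ)) + 1 ≤ |(x i : ℝ)| := by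
        rw [← Int.cast_abs]
        exact_mod_cast hc
      have hlt : Real.sqrt L < (m:ℝ) + 1 := Nat.lt_floor_add_one _
      linarith
    rw [Finset.mem_Icc]
    constructor <;> [linarith [abs_nonneg (x i), neg_abs_le (x i)]; linarith [le_abs_self (x i)]]
  rw [tsum_eq_sum hsupp]
  have hcard : ∑ x ∈ B, (if Wr x ≤ L then (1:ℝ≥0∞) else 0) ≤ (B.card : ℝ≥0∞) := by
    calc ∑ x ∈ B, (if Wr x ≤ L then (1:ℝ≥0∞) else 0)
        ≤ ∑ _x ∈ B, (1:ℝ≥0∞) := Finset.sum_le_sum (fun x _ => by split <;> simp)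
      _ = (B.card : ℝ≥0∞) := by simp
  refine hcard.trans ?_
  have hBcard : B.card = (2*m+1)^d := by
    rw [hB, Fintype.card_piFinset]
    have hic : (Finset.Icc (-(m:ℤ)) (m:ℤ)).card = 2*m+1 := by
      rw [Int.card_Icc]; omega
    simp [hic]
  have hsqrt1 : 1 ≤ Real.sqrt L := by
    rw [show (1:ℝ) = Real.sqrt 1 by simp]
    exact Real.sqrt_le_sqrt hL
  have hmre : (m:ℝ) ≤ Real.sqrt L := Nat.floor_le (by linarith)
  have hreal : ((2*m+1 : ℕ) : ℝ) ≤ 3 * Real.sqrt L := by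
    push_cast; linarith
  have hpow : (((2*m+1)^d : ℕ) : ℝ) ≤ (3 * Real.sqrt L)^d := by
    push_cast
    apply pow_le_pow_left₀ (by positivity)
    push_cast at hreal
    linarith
  have hfin : (3 * Real.sqrt L)^d = (3:ℝ)^d * L ^ ((d:ℝ)/2) := by
    rw [mul_pow]
    congr 1
    rw [Real.sqrt_eq_rpow, ← Real.rpow_natCast (L ^ ((1:ℝ)/2)) d, ← Real.rpow_mul (by linarith)]
    congr 1
    ring
  rw [hBcard, ← ENNReal.ofReal_natCast]
  exact ENNReal.ofReal_le_ofReal (by rw [← hfin]; exact hpow)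

/-- Capped weighted sum: for `e > -d/2`, `∑_{Wr x ≤ M} (Wr x)^e ≤ C·M^{d/2+e}`. -/
lemma capped (hd : 0 < d) {e : ℝ} (he : -((d:ℝ)/2) < e) :
    ∃ C : ℝ≥0∞, C ≠ ⊤ ∧ ∀ M : ℝ, 1 ≤ M →
      ∑' x : Fin d → ℤ, (if Wr x ≤ M then wt e x else 0)
        ≤ C * ENNReal.ofReal (M ^ ((d:ℝ)/2 + e)) := by
  classical
  set κ : ℝ := (d:ℝ)/2 + e with hκ
  have hκpos : 0 < κ := by
    have : (0:ℝ) < d := by exact_mod_cast hd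
    rw [hκ]; linarith
  set r : ℝ := (2:ℝ) ^ κ with hr
  have hr1 : 1 < r := by
    rw [hr]
    rw [Real.one_lt_rpow_iff_of_pos (by norm_num)]
    left; exact ⟨by norm_num, hκpos⟩
  have hrpos : 0 < r := lt_trans one_pos hr1
  set c₀ : ℝ := (2:ℝ)^|e| * ((3:ℝ)^d * (2:ℝ)^((d:ℝ)/2)) with hc₀
  have hc₀pos : 0 < c₀ := by positivity
  set C₁ : ℝ := (3:ℝ)^d + c₀ / (r - 1) with hC₁
  have hC₁pos : 0 < C₁ := by
    have h1 : (0:ℝ) < (3:ℝ)^d := by positivity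
    have h2 : (0:ℝ) < c₀ / (r - 1) := div_pos hc₀pos (by linarith)
    rw [hC₁]; linarith
  have hrn : ∀ n : ℕ, ((2:ℝ)^n) ^ κ = r ^ n := by
    intro n
    rw [← Real.rpow_natCast 2 n, ← Real.rpow_mul (by norm_num), mul_comm,
      Real.rpow_mul (by norm_num), Real.rpow_natCast]
  -- doubling inequality
  have hdouble : ∀ M : ℝ, 1 ≤ M →
      (∑' x : Fin d → ℤ, (if Wr x ≤ 2*M then wt e x else 0))
        ≤ (∑' x : Fin d → ℤ, (if Wr x ≤ M then wt e x else 0))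
          + ENNReal.ofReal (c₀ * M ^ κ) := by
    intro M hM
    have hMpos : (0:ℝ) < M := lt_of_lt_of_le one_pos hM
    have hpt : ∀ x : Fin d → ℤ, (if Wr x ≤ 2*M then wt e x else 0)
        ≤ (if Wr x ≤ M then wt e x else 0)
          + ENNReal.ofReal ((2:ℝ)^|e| * M ^ e) * (if Wr x ≤ 2*M then 1 else 0) := by
      intro x
      by_cases h1 : Wr x ≤ M
      · rw [if_pos h1, if_pos (by linarith)]
        exact le_add_of_le_of_nonneg (le_refl _) (zero_le)
      · rw [if_neg h1]
        by_cases h2 : Wr x ≤ 2*M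
        · rw [if_pos h2, if_pos h2, mul_one]
          push_neg at h1
          have hwe : (Wr x) ^ e ≤ (2:ℝ)^|e| * M ^ e := by
            rcases le_or_gt 0 e with he0 | he0
            · calc (Wr x) ^ e ≤ (2*M) ^ e :=
                    Real.rpow_le_rpow (Wr_pos x).le h2 he0
                _ = (2:ℝ)^e * M^e := Real.mul_rpow (by norm_num) hMpos.le
                _ ≤ (2:ℝ)^|e| * M^e := by
                    have : (2:ℝ)^e ≤ (2:ℝ)^|e| :=
                      Real.rpow_le_rpow_of_exponent_le (by norm_num) (le_abs_self e)
                    have : (0:ℝ) ≤ M ^ e := Real.rpow_nonneg hMpos.le e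
                    nlinarith [Real.rpow_le_rpow_of_exponent_le (show (1:ℝ) ≤ 2 by norm_num) (le_abs_self e)]
            · calc (Wr x) ^ e ≤ M ^ e :=
                    Real.rpow_le_rpow_of_nonpos hMpos h1.le he0.le
                _ ≤ (2:ℝ)^|e| * M^e := by
                    have h2e : (1:ℝ) ≤ (2:ℝ)^|e| := by
                      calc (1:ℝ) = (2:ℝ)^(0:ℝ) := (Real.rpow_zero 2).symm
                        _ ≤ (2:ℝ)^|e| :=
                          Real.rpow_le_rpow_of_exponent_le (by norm_num) (abs_nonneg e)
                    nlinarith [Real.rpow_nonneg hMpos.le e]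
          calc wt e x = ENNReal.ofReal ((Wr x) ^ e) := rfl
            _ ≤ ENNReal.ofReal ((2:ℝ)^|e| * M ^ e) := ENNReal.ofReal_le_ofReal hwe
            _ ≤ _ := le_add_of_nonneg_of_le (zero_le) (le_refl _)
        · rw [if_neg h2, if_neg h2, mul_zero]
          exact zero_le
    calc (∑' x : Fin d → ℤ, (if Wr x ≤ 2*M then wt e x else 0))
        ≤ ∑' x : Fin d → ℤ, ((if Wr x ≤ M then wt e x else 0)
            + ENNReal.ofReal ((2:ℝ)^|e| * M ^ e) * (if Wr x ≤ 2*M then 1 else 0)) :=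
          ENNReal.tsum_le_tsum hpt
      _ = (∑' x : Fin d → ℤ, (if Wr x ≤ M then wt e x else 0))
            + ENNReal.ofReal ((2:ℝ)^|e| * M ^ e)
              * ∑' x : Fin d → ℤ, (if Wr x ≤ 2*M then (1:ℝ≥0∞) else 0) := by
          rw [ENNReal.tsum_add, ENNReal.tsum_mul_left]
      _ ≤ (∑' x : Fin d → ℤ, (if Wr x ≤ M then wt e x else 0))
            + ENNReal.ofReal ((2:ℝ)^|e| * M ^ e)
              * ENNReal.ofReal ((3:ℝ)^d * (2*M) ^ ((d:ℝ)/2)) := by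
          gcongr
          exact count_le (2*M) (by linarith)
      _ = (∑' x : Fin d → ℤ, (if Wr x ≤ M then wt e x else 0))
            + ENNReal.ofReal (c₀ * M ^ κ) := by
          congr 1
          rw [← ENNReal.ofReal_mul (by positivity)]
          congr 1
          rw [Real.mul_rpow (by norm_num) hMpos.le, hc₀, hκ, Real.rpow_add hMpos]
          ring
  -- induction
  have hind : ∀ n : ℕ, (∑' x : Fin d → ℤ, (if Wr x ≤ (2:ℝ)^n then wt e x else 0))
      ≤ ENNReal.ofReal (C₁ * r ^ n) := by
    intro n
    induction n with
    | zero =>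
      simp only [pow_zero]
      calc (∑' x : Fin d → ℤ, (if Wr x ≤ (1:ℝ) then wt e x else 0))
          ≤ ∑' x : Fin d → ℤ, (if Wr x ≤ (1:ℝ) then (1:ℝ≥0∞) else 0) := by
            apply ENNReal.tsum_le_tsum
            intro x
            by_cases h : Wr x ≤ (1:ℝ)
            · rw [if_pos h, if_pos h]
              have : Wr x = 1 := le_antisymm h (one_le_Wr x)
              rw [wt, this, Real.one_rpow]
              simp
            · rw [if_neg h, if_neg h]
        _ ≤ ENNReal.ofReal ((3:ℝ)^d * (1:ℝ) ^ ((d:ℝ)/2)) := count_le 1 le_rfl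
        _ ≤ ENNReal.ofReal (C₁ * r ^ 0) := by
            apply ENNReal.ofReal_le_ofReal
            rw [Real.one_rpow, pow_zero, mul_one, mul_one, hC₁]
            have : 0 < c₀ / (r - 1) := div_pos hc₀pos (by linarith)
            linarith
    | succ n ih =>
      have h2n1 : (1:ℝ) ≤ (2:ℝ)^n := one_le_pow₀ (by norm_num)
      calc (∑' x : Fin d → ℤ, (if Wr x ≤ (2:ℝ)^(n+1) then wt e x else 0))
          = (∑' x : Fin d → ℤ, (if Wr x ≤ 2*(2:ℝ)^n then wt e x else 0)) := by
            congr 1; funext x; rw [pow_succ, mul_comm ((2:ℝ)^n) 2]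
        _ ≤ (∑' x : Fin d → ℤ, (if Wr x ≤ (2:ℝ)^n then wt e x else 0))
              + ENNReal.ofReal (c₀ * ((2:ℝ)^n) ^ κ) := hdouble _ h2n1
        _ ≤ ENNReal.ofReal (C₁ * r ^ n) + ENNReal.ofReal (c₀ * r ^ n) := by
            refine add_le_add ih (ENNReal.ofReal_le_ofReal ?_)
            rw [hrn n]
        _ = ENNReal.ofReal ((C₁ + c₀) * r ^ n) := by
            rw [← ENNReal.ofReal_add (by positivity) (by positivity)]
            congr 1; ring
        _ ≤ ENNReal.ofReal (C₁ * r ^ (n+1)) := by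
            apply ENNReal.ofReal_le_ofReal
            have hkey : C₁ + c₀ ≤ C₁ * r := by
              have hr1' : r - 1 ≠ 0 := by linarith
              have hexp : C₁ * (r - 1) = (3:ℝ)^d * (r-1) + c₀ := by
                rw [hC₁, add_mul, div_mul_cancel₀ _ hr1']
              have h3 : (0:ℝ) ≤ (3:ℝ)^d * (r-1) :=
                mul_nonneg (by positivity) (by linarith)
              nlinarith
            have hrn0 : (0:ℝ) ≤ r ^ n := by positivity
            calc (C₁ + c₀) * r ^ n ≤ (C₁ * r) * r ^ n := by nlinarith
              _ = C₁ * r ^ (n+1) := by ring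
  -- general M
  refine ⟨ENNReal.ofReal (C₁ * r), ENNReal.ofReal_ne_top, ?_⟩
  intro M hM
  have hMpos : (0:ℝ) < M := lt_of_lt_of_le one_pos hM
  set n : ℕ := ⌈Real.logb 2 M⌉₊ with hn
  have hlogb0 : 0 ≤ Real.logb 2 M := Real.logb_nonneg (by norm_num) hM
  have hMle : M ≤ (2:ℝ)^n := by
    calc M = (2:ℝ) ^ (Real.logb 2 M) := (Real.rpow_logb (by norm_num) (by norm_num) hMpos).symm
      _ ≤ (2:ℝ) ^ ((n:ℝ)) :=
        Real.rpow_le_rpow_of_exponent_le (by norm_num) (Nat.le_ceil _)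
      _ = (2:ℝ)^n := Real.rpow_natCast 2 n
  have h2nle : (2:ℝ)^n ≤ 2 * M := by
    have hceil : (n:ℝ) ≤ Real.logb 2 M + 1 := le_of_lt (Nat.ceil_lt_add_one hlogb0)
    calc (2:ℝ)^n = (2:ℝ) ^ ((n:ℝ)) := (Real.rpow_natCast 2 n).symm
      _ ≤ (2:ℝ) ^ (Real.logb 2 M + 1) :=
        Real.rpow_le_rpow_of_exponent_le (by norm_num) hceil
      _ = (2:ℝ) ^ (Real.logb 2 M) * (2:ℝ)^(1:ℝ) := Real.rpow_add (by norm_num) _ _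
      _ = 2 * M := by
        rw [Real.rpow_logb (by norm_num) (by norm_num) hMpos, Real.rpow_one]; ring
  calc ∑' x : Fin d → ℤ, (if Wr x ≤ M then wt e x else 0)
      ≤ ∑' x : Fin d → ℤ, (if Wr x ≤ (2:ℝ)^n then wt e x else 0) := by
        apply ENNReal.tsum_le_tsum
        intro x
        by_cases h : Wr x ≤ M
        · rw [if_pos h, if_pos (le_trans h hMle)]
        · rw [if_neg h]; exact zero_le
    _ ≤ ENNReal.ofReal (C₁ * r ^ n) := hind n
    _ ≤ ENNReal.ofReal (C₁ * r) * ENNReal.ofReal (M ^ κ) := by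
        rw [← ENNReal.ofReal_mul (by positivity)]
        apply ENNReal.ofReal_le_ofReal
        have h1 : r ^ n = ((2:ℝ)^n) ^ κ := (hrn n).symm
        have h2 : ((2:ℝ)^n : ℝ) ^ κ ≤ (2*M) ^ κ :=
          Real.rpow_le_rpow (by positivity) h2nle hκpos.le
        have h3 : ((2:ℝ)*M) ^ κ = r * M ^ κ := by
          rw [Real.mul_rpow (by norm_num) hMpos.le, hr]
        have h4 : 0 < C₁ := hC₁pos
        calc C₁ * r ^ n = C₁ * ((2:ℝ)^n) ^ κ := by rw [h1]
          _ ≤ C₁ * (r * M ^ κ) := by rw [← h3]; nlinarith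
          _ = C₁ * r * M ^ κ := by ring

lemma Wr_sum_le (a b c : Fin d → ℤ) : Wr (a+b+c) ≤ 3 * (Wr a + Wr b + Wr c) := by
  have key : ∑ i, (((a+b+c) i : ℝ))^2
      ≤ ∑ i, (3*(((a i:ℝ))^2 + ((b i:ℝ))^2 + ((c i:ℝ))^2)) := by
    apply Finset.sum_le_sum
    intro i _
    have hcast : (((a+b+c) i : ℤ) : ℝ) = (a i:ℝ) + (b i:ℝ) + (c i:ℝ) := by
      simp [Pi.add_apply]
    rw [hcast]
    nlinarith [sq_nonneg ((a i:ℝ) - (b i:ℝ)), sq_nonneg ((a i:ℝ) - (c i:ℝ)),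
      sq_nonneg ((b i:ℝ) - (c i:ℝ))]
  have hdist : ∑ i, (3*(((a i:ℝ))^2 + ((b i:ℝ))^2 + ((c i:ℝ))^2))
      = 3*((∑ i, ((a i:ℝ))^2) + (∑ i, ((b i:ℝ))^2) + (∑ i, ((c i:ℝ))^2)) := by
    rw [← Finset.mul_sum]
    congr 1
    rw [Finset.sum_add_distrib, Finset.sum_add_distrib]
  unfold Wr
  rw [hdist] at key
  linarith

lemma Wr_le_nine {x y u : Fin d → ℤ} (hx : Wr x ≤ Wr u) (hy : Wr y ≤ Wr u) :
    Wr (-(x+y+u)) ≤ 9 * Wr u := by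
  rw [Wr_neg]
  have h := Wr_sum_le x y u
  linarith

lemma wt_comparable (a : ℝ) {x u : Fin d → ℤ} (h1 : Wr u ≤ Wr x) (h2 : Wr x ≤ 9 * Wr u) :
    wt a x ≤ ENNReal.ofReal ((9:ℝ) ^ |a|) * wt a u := by
  rw [wt, wt, ← ENNReal.ofReal_mul (by positivity)]
  apply ENNReal.ofReal_le_ofReal
  have h9 : (1:ℝ) ≤ (9:ℝ) ^ |a| := by
    calc (1:ℝ) = (9:ℝ)^(0:ℝ) := (Real.rpow_zero 9).symm
      _ ≤ (9:ℝ)^|a| := Real.rpow_le_rpow_of_exponent_le (by norm_num) (abs_nonneg a)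
  rcases le_or_gt 0 a with ha | ha
  · calc Wr x ^ a ≤ (9 * Wr u) ^ a := Real.rpow_le_rpow (Wr_pos x).le h2 ha
      _ = (9:ℝ)^a * Wr u ^ a := Real.mul_rpow (by norm_num) (Wr_pos u).le
      _ ≤ (9:ℝ)^|a| * Wr u ^ a := by
          have h1' : (9:ℝ)^a ≤ (9:ℝ)^|a| :=
            Real.rpow_le_rpow_of_exponent_le (by norm_num) (le_abs_self a)
          have h2' : (0:ℝ) ≤ Wr u ^ a := Real.rpow_nonneg (Wr_pos u).le a
          nlinarith
  · calc Wr x ^ a ≤ Wr u ^ a := Real.rpow_le_rpow_of_nonpos (Wr_pos u) h1 ha.le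
      _ ≤ (9:ℝ)^|a| * Wr u ^ a := by
          have h2' : (0:ℝ) ≤ Wr u ^ a := Real.rpow_nonneg (Wr_pos u).le a
          nlinarith

lemma sq_rpow_half (x : ℝ≥0∞) : (x ^ (1/2:ℝ))^2 = x := by
  rw [← ENNReal.rpow_natCast (x ^ (1/2:ℝ)) 2, ← ENNReal.rpow_mul]
  norm_num

lemma sq_le_sq' {x y : ℝ≥0∞} (h : x ≤ y) : x^2 ≤ y^2 := by
  rw [pow_two, pow_two]; exact mul_le_mul' h h

/-- Abstract Cauchy–Schwarz step for the quadrilinear form. -/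
lemma abs_cs (k : (Fin d → ℤ) × (Fin d → ℤ) × (Fin d → ℤ) → ℝ≥0∞)
    (φ : (Fin d → ℤ) × (Fin d → ℤ) × (Fin d → ℤ) → (Fin d → ℤ))
    (hφ : ∀ x y : Fin d → ℤ, Function.Injective fun u => φ (x, y, u))
    (A : ℝ≥0∞)
    (hA : ∀ u : Fin d → ℤ, ∑' q : (Fin d → ℤ) × (Fin d → ℤ), k (q.1, q.2, u) ^ 2 ≤ A)
    (F1 F2 F3 F4 : (Fin d → ℤ) → ℝ≥0∞) :
    ∑' p : (Fin d → ℤ) × (Fin d → ℤ) × (Fin d → ℤ),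
      k p * F1 p.1 * F2 p.2.1 * F3 p.2.2 * F4 (φ p)
      ≤ A ^ (1/2:ℝ) * nrm F1 * nrm F2 * nrm F3 * nrm F4 := by
  classical
  set G : (Fin d → ℤ) → ℝ≥0∞ := fun u => ∑' q : (Fin d → ℤ) × (Fin d → ℤ),
    k (q.1, q.2, u) * (F1 q.1 * F2 q.2 * F4 (φ (q.1, q.2, u))) with hG
  have step1 : (∑' p : (Fin d → ℤ) × (Fin d → ℤ) × (Fin d → ℤ),
      k p * F1 p.1 * F2 p.2.1 * F3 p.2.2 * F4 (φ p))
      = ∑' u : Fin d → ℤ, F3 u * G u := by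
    rw [← (Equiv.prodAssoc (Fin d → ℤ) (Fin d → ℤ) (Fin d → ℤ)).tsum_eq
      (fun p => k p * F1 p.1 * F2 p.2.1 * F3 p.2.2 * F4 (φ p))]
    simp only [Equiv.prodAssoc_apply]
    rw [ENNReal.tsum_prod (f := fun (a : (Fin d → ℤ) × (Fin d → ℤ)) (b : Fin d → ℤ) =>
      k (a.1, a.2, b) * F1 a.1 * F2 a.2 * F3 b * F4 (φ (a.1, a.2, b)))]
    rw [ENNReal.tsum_comm (f := fun (a : (Fin d → ℤ) × (Fin d → ℤ)) (b : Fin d → ℤ) =>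
      k (a.1, a.2, b) * F1 a.1 * F2 a.2 * F3 b * F4 (φ (a.1, a.2, b)))]
    refine tsum_congr fun u => ?_
    rw [hG, ← ENNReal.tsum_mul_left]
    exact tsum_congr fun q => by ring
  rw [step1]
  have hGu : ∀ u, G u ^ 2
      ≤ A * ∑' q : (Fin d → ℤ) × (Fin d → ℤ),
          (F1 q.1 * F2 q.2 * F4 (φ (q.1, q.2, u)))^2 := by
    intro u
    have h2 : G u ≤ (∑' q : (Fin d → ℤ) × (Fin d → ℤ), k (q.1,q.2,u)^2)^(1/2:ℝ)
        * (∑' q : (Fin d → ℤ) × (Fin d → ℤ),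
            (F1 q.1 * F2 q.2 * F4 (φ (q.1,q.2,u)))^2)^(1/2:ℝ) :=
      tsum_mul_le_sq _ _
    calc G u^2 ≤ ((∑' q : (Fin d → ℤ) × (Fin d → ℤ), k (q.1,q.2,u)^2)^(1/2:ℝ)
          * (∑' q : (Fin d → ℤ) × (Fin d → ℤ),
              (F1 q.1 * F2 q.2 * F4 (φ (q.1,q.2,u)))^2)^(1/2:ℝ))^2 := sq_le_sq' h2
      _ = (∑' q : (Fin d → ℤ) × (Fin d → ℤ), k (q.1,q.2,u)^2)
          * (∑' q : (Fin d → ℤ) × (Fin d → ℤ),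
              (F1 q.1 * F2 q.2 * F4 (φ (q.1,q.2,u)))^2) := by
          rw [mul_pow, sq_rpow_half, sq_rpow_half]
      _ ≤ A * ∑' q : (Fin d → ℤ) × (Fin d → ℤ),
            (F1 q.1 * F2 q.2 * F4 (φ (q.1,q.2,u)))^2 := by
          gcongr
          exact hA u
  have hsumG : ∑' u, G u ^2
      ≤ A * ((∑' x, F1 x^2) * ((∑' y, F2 y^2) * (∑' w, F4 w^2))) := by
    calc ∑' u, G u^2
        ≤ ∑' u, A * ∑' q : (Fin d → ℤ) × (Fin d → ℤ),
            (F1 q.1 * F2 q.2 * F4 (φ (q.1, q.2, u)))^2 := ENNReal.tsum_le_tsum hGu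
      _ = A * ∑' u, ∑' q : (Fin d → ℤ) × (Fin d → ℤ),
            (F1 q.1 * F2 q.2 * F4 (φ (q.1,q.2,u)))^2 := ENNReal.tsum_mul_left
      _ = A * ∑' q : (Fin d → ℤ) × (Fin d → ℤ), ∑' u,
            (F1 q.1 * F2 q.2 * F4 (φ (q.1,q.2,u)))^2 := by rw [ENNReal.tsum_comm]
      _ ≤ A * ∑' q : (Fin d → ℤ) × (Fin d → ℤ),
            (F1 q.1)^2 * (F2 q.2)^2 * (∑' w, F4 w ^2) := by
          refine mul_le_mul_right (ENNReal.tsum_le_tsum fun q => ?_) A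
          calc ∑' u, (F1 q.1 * F2 q.2 * F4 (φ (q.1,q.2,u)))^2
              = (F1 q.1)^2 * (F2 q.2)^2 * ∑' u, F4 (φ (q.1,q.2,u))^2 := by
                rw [mul_assoc, ← ENNReal.tsum_mul_left, ← ENNReal.tsum_mul_left]
                exact tsum_congr fun u => by ring
            _ ≤ (F1 q.1)^2 * (F2 q.2)^2 * ∑' w, F4 w^2 := by
                rw [mul_assoc, mul_assoc]
                refine mul_le_mul_right (mul_le_mul_right ?_ _) _
                exact ENNReal.tsum_comp_le_tsum_of_injective (hφ q.1 q.2) (fun w => F4 w ^2)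
      _ = A * ((∑' x, F1 x^2) * ((∑' y, F2 y^2) * (∑' w, F4 w^2))) := by
          congr 1
          rw [ENNReal.tsum_prod (f := fun (a : Fin d → ℤ) (b : Fin d → ℤ) =>
            (F1 a)^2 * (F2 b)^2 * (∑' w, F4 w^2))]
          calc ∑' (a : Fin d → ℤ), ∑' (b : Fin d → ℤ), (F1 a)^2*(F2 b)^2*(∑' w, F4 w^2)
              = ∑' (a : Fin d → ℤ), (F1 a)^2 * ((∑' y, F2 y^2) * (∑' w, F4 w^2)) := by
                refine tsum_congr fun a => ?_
                rw [← ENNReal.tsum_mul_right, ← ENNReal.tsum_mul_left]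
                exact tsum_congr fun b => by ring
            _ = (∑' x, F1 x^2) * ((∑' y, F2 y^2) * (∑' w, F4 w^2)) := ENNReal.tsum_mul_right
  calc ∑' u, F3 u * G u
      ≤ (∑' u, F3 u ^2)^(1/2:ℝ) * (∑' u, G u^2)^(1/2:ℝ) := tsum_mul_le_sq F3 G
    _ ≤ (∑' u, F3 u ^2)^(1/2:ℝ)
        * (A * ((∑' x, F1 x^2) * ((∑' y, F2 y^2) * (∑' w, F4 w^2))))^(1/2:ℝ) := by
        gcongr
    _ = A ^ (1/2:ℝ) * nrm F1 * nrm F2 * nrm F3 * nrm F4 := by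
        rw [ENNReal.mul_rpow_of_nonneg _ _ (by norm_num : (0:ℝ) ≤ 1/2),
          ENNReal.mul_rpow_of_nonneg _ _ (by norm_num : (0:ℝ) ≤ 1/2),
          ENNReal.mul_rpow_of_nonneg _ _ (by norm_num : (0:ℝ) ≤ 1/2)]
        unfold nrm
        ring

/-- Region estimate: over the region `Wr x, Wr y ≤ Wr u ≤ Wr v`, `v = -(x+y+u)`. -/
lemma reg0 (hd : 0 < d) (t : Fin 4 → ℝ) (ht : ∀ i, -((d:ℝ)/4) < t i)
    (hsum : ∑ i, t i = -((d:ℝ)/2)) :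
    ∃ C : ℝ≥0∞, C ≠ ⊤ ∧ ∀ G : Fin 4 → (Fin d → ℤ) → ℝ≥0∞,
      (∑' p : (Fin d → ℤ) × (Fin d → ℤ) × (Fin d → ℤ),
        (if Wr p.1 ≤ Wr p.2.2 ∧ Wr p.2.1 ≤ Wr p.2.2
            ∧ Wr p.2.2 ≤ Wr (-(p.1+p.2.1+p.2.2)) then
          wt (t 0) (-(p.1+p.2.1+p.2.2)) * wt (t 1) p.2.2 * wt (t 2) p.1 * wt (t 3) p.2.1
        else 0) * G 2 p.1 * G 3 p.2.1 * G 1 p.2.2 * G 0 (-(p.1+p.2.1+p.2.2)))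
      ≤ C * (nrm (G 0) * nrm (G 1) * nrm (G 2) * nrm (G 3)) := by
  have h2 : -((d:ℝ)/2) < 2 * t 2 := by have := ht 2; linarith
  have h3 : -((d:ℝ)/2) < 2 * t 3 := by have := ht 3; linarith
  obtain ⟨C₂, hC₂top, hC₂⟩ := capped hd h2
  obtain ⟨C₃, hC₃top, hC₃⟩ := capped hd h3
  set c9 : ℝ≥0∞ := ENNReal.ofReal ((9:ℝ) ^ |2 * t 0|) with hc9
  set A : ℝ≥0∞ := c9 * (C₂ * C₃) with hA_def
  have hAtop : A ≠ ⊤ := by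
    rw [hA_def]
    exact ENNReal.mul_ne_top ENNReal.ofReal_ne_top (ENNReal.mul_ne_top hC₂top hC₃top)
  refine ⟨A ^ (1/2:ℝ), ENNReal.rpow_ne_top_of_nonneg (by norm_num) hAtop, ?_⟩
  intro G
  set k : (Fin d → ℤ) × (Fin d → ℤ) × (Fin d → ℤ) → ℝ≥0∞ := fun p =>
    if Wr p.1 ≤ Wr p.2.2 ∧ Wr p.2.1 ≤ Wr p.2.2
        ∧ Wr p.2.2 ≤ Wr (-(p.1+p.2.1+p.2.2)) then
      wt (t 0) (-(p.1+p.2.1+p.2.2)) * wt (t 1) p.2.2 * wt (t 2) p.1 * wt (t 3) p.2.1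
    else 0 with hk
  set φ : (Fin d → ℤ) × (Fin d → ℤ) × (Fin d → ℤ) → (Fin d → ℤ) := fun p =>
    -(p.1+p.2.1+p.2.2) with hφdef
  have hφ : ∀ x y : Fin d → ℤ, Function.Injective fun u => φ (x, y, u) := by
    intro x y u₁ u₂ h
    simp only [hφdef, neg_inj] at h
    exact add_left_cancel h
  have hA : ∀ u : Fin d → ℤ, ∑' q : (Fin d → ℤ) × (Fin d → ℤ), k (q.1, q.2, u) ^ 2 ≤ A := by
    intro u
    have hWu : (1:ℝ) ≤ Wr u := one_le_Wr u
    have hpt : ∀ q : (Fin d → ℤ) × (Fin d → ℤ), k (q.1, q.2, u) ^ 2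
        ≤ (if Wr q.1 ≤ Wr u then wt (2*t 2) q.1 else 0)
          * ((if Wr q.2 ≤ Wr u then wt (2*t 3) q.2 else 0)
            * (c9 * (wt (2*t 0) u * wt (2*t 1) u))) := by
      intro q
      rw [hk]
      simp only
      split
      case isTrue h =>
        obtain ⟨hx, hy, huv⟩ := h
        rw [if_pos hx, if_pos hy]
        have h9 : Wr (-(q.1+q.2+u)) ≤ 9 * Wr u := Wr_le_nine hx hy
        have hcmp : wt (2*t 0) (-(q.1+q.2+u)) ≤ c9 * wt (2*t 0) u :=
          wt_comparable (2*t 0) huv h9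
        have hexpand : (wt (t 0) (-(q.1+q.2+u)) * wt (t 1) u * wt (t 2) q.1 * wt (t 3) q.2)^2
            = wt (2*t 0) (-(q.1+q.2+u)) * wt (2*t 1) u * wt (2*t 2) q.1 * wt (2*t 3) q.2 := by
          have e0 := wt_mul (t 0) (t 0) (-(q.1+q.2+u))
          have e1 := wt_mul (t 1) (t 1) u
          have e2 := wt_mul (t 2) (t 2) q.1
          have e3 := wt_mul (t 3) (t 3) q.2
          rw [show (2*t 0) = t 0 + t 0 by ring, show (2*t 1) = t 1 + t 1 by ring,
            show (2*t 2) = t 2 + t 2 by ring, show (2*t 3) = t 3 + t 3 by ring,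
            ← e0, ← e1, ← e2, ← e3]
          ring
        rw [hexpand]
        calc wt (2*t 0) (-(q.1+q.2+u)) * wt (2*t 1) u * wt (2*t 2) q.1 * wt (2*t 3) q.2
            ≤ (c9 * wt (2*t 0) u) * wt (2*t 1) u * wt (2*t 2) q.1 * wt (2*t 3) q.2 := by
              gcongr
          _ = wt (2*t 2) q.1 * (wt (2*t 3) q.2 * (c9 * (wt (2*t 0) u * wt (2*t 1) u))) := by
              ring
      case isFalse h =>
        simp
    calc ∑' q : (Fin d → ℤ) × (Fin d → ℤ), k (q.1, q.2, u) ^ 2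
        ≤ ∑' q : (Fin d → ℤ) × (Fin d → ℤ),
            (if Wr q.1 ≤ Wr u then wt (2*t 2) q.1 else 0)
            * ((if Wr q.2 ≤ Wr u then wt (2*t 3) q.2 else 0)
              * (c9 * (wt (2*t 0) u * wt (2*t 1) u))) := ENNReal.tsum_le_tsum hpt
      _ = (∑' x : Fin d → ℤ, (if Wr x ≤ Wr u then wt (2*t 2) x else 0))
          * ((∑' y : Fin d → ℤ, (if Wr y ≤ Wr u then wt (2*t 3) y else 0))
            * (c9 * (wt (2*t 0) u * wt (2*t 1) u))) := by
          rw [ENNReal.tsum_prod (f := fun (a : Fin d → ℤ) (b : Fin d → ℤ) =>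
            (if Wr a ≤ Wr u then wt (2*t 2) a else 0)
            * ((if Wr b ≤ Wr u then wt (2*t 3) b else 0)
              * (c9 * (wt (2*t 0) u * wt (2*t 1) u))))]
          rw [← ENNReal.tsum_mul_right]
          refine tsum_congr fun a => ?_
          rw [← ENNReal.tsum_mul_right, ← ENNReal.tsum_mul_left]
      _ ≤ (C₂ * ENNReal.ofReal ((Wr u) ^ ((d:ℝ)/2 + 2*t 2)))
          * ((C₃ * ENNReal.ofReal ((Wr u) ^ ((d:ℝ)/2 + 2*t 3)))
            * (c9 * (wt (2*t 0) u * wt (2*t 1) u))) := by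
          gcongr
          · exact hC₂ (Wr u) hWu
          · exact hC₃ (Wr u) hWu
      _ = A := by
          rw [hA_def]
          have hw1 : ENNReal.ofReal ((Wr u) ^ ((d:ℝ)/2 + 2*t 2)) = wt ((d:ℝ)/2 + 2*t 2) u := rfl
          have hw2 : ENNReal.ofReal ((Wr u) ^ ((d:ℝ)/2 + 2*t 3)) = wt ((d:ℝ)/2 + 2*t 3) u := rfl
          rw [hw1, hw2]
          have hcollect : wt ((d:ℝ)/2 + 2*t 2) u * (wt ((d:ℝ)/2 + 2*t 3) u
              * (wt (2*t 0) u * wt (2*t 1) u)) = 1 := by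
            rw [wt_mul, wt_mul, wt_mul]
            have hexp : 2*t 0 + (2*t 1 + ((d:ℝ)/2 + 2*t 2 + ((d:ℝ)/2 + 2*t 3))) = 0 := by
              have hs : t 0 + t 1 + t 2 + t 3 = -((d:ℝ)/2) := by
                rw [← hsum, Fin.sum_univ_four]
              linarith
            rw [show (2*t 0 + (2*t 1 + ((d:ℝ)/2 + 2*t 2 + ((d:ℝ)/2 + 2*t 3)))) =
              ((d:ℝ)/2 + 2*t 2) + (((d:ℝ)/2 + 2*t 3) + (2*t 0 + 2*t 1)) from by ring] at hexp
            rw [hexp]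
            exact wt_zero u
          calc C₂ * wt ((d:ℝ)/2 + 2*t 2) u * (C₃ * wt ((d:ℝ)/2 + 2*t 3) u * (c9 * (wt (2*t 0) u * wt (2*t 1) u))) = c9 * (C₂ * C₃) * (wt ((d:ℝ)/2 + 2*t 2) u * (wt ((d:ℝ)/2 + 2*t 3) u * (wt (2*t 0) u * wt (2*t 1) u))) := by ring
            _ = c9 * (C₂ * C₃) := by rw [hcollect, mul_one]
  have habs := abs_cs k φ hφ A hA (G 2) (G 3) (G 1) (G 0)
  calc (∑' p : (Fin d → ℤ) × (Fin d → ℤ) × (Fin d → ℤ),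
        (if Wr p.1 ≤ Wr p.2.2 ∧ Wr p.2.1 ≤ Wr p.2.2
            ∧ Wr p.2.2 ≤ Wr (-(p.1+p.2.1+p.2.2)) then
          wt (t 0) (-(p.1+p.2.1+p.2.2)) * wt (t 1) p.2.2 * wt (t 2) p.1 * wt (t 3) p.2.1
        else 0) * G 2 p.1 * G 3 p.2.1 * G 1 p.2.2 * G 0 (-(p.1+p.2.1+p.2.2)))
      = ∑' p : (Fin d → ℤ) × (Fin d → ℤ) × (Fin d → ℤ),
          k p * G 2 p.1 * G 3 p.2.1 * G 1 p.2.2 * G 0 (φ p) := rfl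
    _ ≤ A ^ (1/2:ℝ) * nrm (G 2) * nrm (G 3) * nrm (G 1) * nrm (G 0) := habs
    _ = A ^ (1/2:ℝ) * (nrm (G 0) * nrm (G 1) * nrm (G 2) * nrm (G 3)) := by ring

lemma wt_neg (a : ℝ) (x : Fin d → ℤ) : wt a (-x) = wt a x := by
  rw [wt, wt, Wr_neg]

/-- The main quadrilinear estimate. -/
lemma main_quad (hd : 0 < d) (t : Fin 4 → ℝ) (ht : ∀ i, -((d:ℝ)/4) < t i)
    (hsum : ∑ i, t i = -((d:ℝ)/2)) :
    ∃ C : ℝ≥0∞, C ≠ ⊤ ∧ ∀ G : Fin 4 → (Fin d → ℤ) → ℝ≥0∞,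
      (∑' p : (Fin d → ℤ) × (Fin d → ℤ) × (Fin d → ℤ),
        (wt (t 0) p.1 * wt (t 1) p.2.1 * wt (t 2) p.2.2 * wt (t 3) (p.1+p.2.1+p.2.2))
        * (G 0 p.1 * G 1 p.2.1 * G 2 p.2.2 * G 3 (p.1+p.2.1+p.2.2)))
      ≤ C * (nrm (G 0) * nrm (G 1) * nrm (G 2) * nrm (G 3)) := by
  classical
  have hreg := fun π : Equiv.Perm (Fin 4) =>
    reg0 hd (t ∘ π) (fun i => ht (π i))
      (by rw [← hsum]; exact Equiv.sum_comp π t)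
  choose Cp hCpt hCp using hreg
  refine ⟨∑ π : Equiv.Perm (Fin 4), Cp π, ?_, ?_⟩
  · exact ENNReal.sum_ne_top.mpr fun π _ => hCpt π
  intro G
  set G' : Fin 4 → (Fin d → ℤ) → ℝ≥0∞ :=
    ![G 0, G 1, G 2, fun x => G 3 (-x)] with hG'
  have hg'0 : G' 0 = G 0 := rfl
  have hg'1 : G' 1 = G 1 := rfl
  have hg'2 : G' 2 = G 2 := rfl
  have hg'3 : G' 3 = fun x => G 3 (-x) := rfl
  have hnrmG' : ∀ i, nrm (G' i) = nrm (G i) := by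
    intro i
    fin_cases i
    · rfl
    · rfl
    · rfl
    · exact nrm_comp_neg (G 3)
  set z : ((Fin d → ℤ) × (Fin d → ℤ) × (Fin d → ℤ)) → Fin 4 → (Fin d → ℤ) :=
    fun p => ![p.1, p.2.1, p.2.2, -(p.1+p.2.1+p.2.2)] with hz
  have hz0 : ∀ p, z p 0 = p.1 := fun p => rfl
  have hz1 : ∀ p, z p 1 = p.2.1 := fun p => rfl
  have hz2 : ∀ p, z p 2 = p.2.2 := fun p => rfl
  have hz3 : ∀ p, z p 3 = -(p.1+p.2.1+p.2.2) := fun p => rfl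
  have hzsum : ∀ p, z p 0 + z p 1 + z p 2 + z p 3 = 0 := by
    intro p
    rw [hz0, hz1, hz2, hz3]
    abel
  have hterm : ∀ p : (Fin d → ℤ) × (Fin d → ℤ) × (Fin d → ℤ),
      (wt (t 0) p.1 * wt (t 1) p.2.1 * wt (t 2) p.2.2 * wt (t 3) (p.1+p.2.1+p.2.2))
        * (G 0 p.1 * G 1 p.2.1 * G 2 p.2.2 * G 3 (p.1+p.2.1+p.2.2))
      = ∏ i, (wt (t i) (z p i) * G' i (z p i)) := by
    intro p
    rw [Fin.prod_univ_four, hz0, hz1, hz2, hz3]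
    have hg3 : G' 3 (-(p.1+p.2.1+p.2.2)) = G 3 (p.1+p.2.1+p.2.2) := by
      rw [hg'3]
      simp
    have hg0 : G' 0 p.1 = G 0 p.1 := by rw [hg'0]
    have hg1 : G' 1 p.2.1 = G 1 p.2.1 := by rw [hg'1]
    have hg2 : G' 2 p.2.2 = G 2 p.2.2 := by rw [hg'2]
    rw [hg3, hg0, hg1, hg2, wt_neg]
    ring
  -- the sorted covering
  have hcover : ∀ p : (Fin d → ℤ) × (Fin d → ℤ) × (Fin d → ℤ),
      (∏ i, (wt (t i) (z p i) * G' i (z p i)))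
      ≤ ∑ π : Equiv.Perm (Fin 4),
          (if Wr (z p (π 2)) ≤ Wr (z p (π 1)) ∧ Wr (z p (π 3)) ≤ Wr (z p (π 1))
              ∧ Wr (z p (π 1)) ≤ Wr (z p (π 0)) then
            ∏ i, (wt (t i) (z p i) * G' i (z p i)) else 0) := by
    intro p
    set W : Fin 4 → ℝ := fun i => Wr (z p i) with hW
    set ρ : Equiv.Perm (Fin 4) := Tuple.sort W with hρ
    set π₁ : Equiv.Perm (Fin 4) := Fin.revPerm.trans ρ with hπ₁
    have hπval : ∀ j : Fin 4, π₁ j = ρ (Fin.rev j) := fun j => rfl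
    have hmono : Monotone (W ∘ ρ) := Tuple.monotone_sort W
    have hcond : Wr (z p (π₁ 2)) ≤ Wr (z p (π₁ 1)) ∧ Wr (z p (π₁ 3)) ≤ Wr (z p (π₁ 1))
        ∧ Wr (z p (π₁ 1)) ≤ Wr (z p (π₁ 0)) := by
      refine ⟨?_, ?_, ?_⟩
      · rw [hπval, hπval, show Fin.rev 2 = (1:Fin 4) from by decide,
          show Fin.rev 1 = (2:Fin 4) from by decide]
        exact hmono (by decide : (1:Fin 4) ≤ 2)
      · rw [hπval, hπval, show Fin.rev 3 = (0:Fin 4) from by decide,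
          show Fin.rev 1 = (2:Fin 4) from by decide]
        exact hmono (by decide : (0:Fin 4) ≤ 2)
      · rw [hπval, hπval, show Fin.rev 1 = (2:Fin 4) from by decide,
          show Fin.rev 0 = (3:Fin 4) from by decide]
        exact hmono (by decide : (2:Fin 4) ≤ 3)
    calc (∏ i, (wt (t i) (z p i) * G' i (z p i)))
        = (if Wr (z p (π₁ 2)) ≤ Wr (z p (π₁ 1)) ∧ Wr (z p (π₁ 3)) ≤ Wr (z p (π₁ 1))
              ∧ Wr (z p (π₁ 1)) ≤ Wr (z p (π₁ 0)) then
            ∏ i, (wt (t i) (z p i) * G' i (z p i)) else 0) := (if_pos hcond).symm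
      _ ≤ _ := Finset.single_le_sum (f := fun π : Equiv.Perm (Fin 4) =>
            (if Wr (z p (π 2)) ≤ Wr (z p (π 1)) ∧ Wr (z p (π 3)) ≤ Wr (z p (π 1))
                ∧ Wr (z p (π 1)) ≤ Wr (z p (π 0)) then
              ∏ i, (wt (t i) (z p i) * G' i (z p i)) else 0))
            (fun π _ => zero_le) (Finset.mem_univ π₁)
  -- per-permutation estimate
  have hper : ∀ π : Equiv.Perm (Fin 4),
      (∑' p : (Fin d → ℤ) × (Fin d → ℤ) × (Fin d → ℤ),
        (if Wr (z p (π 2)) ≤ Wr (z p (π 1)) ∧ Wr (z p (π 3)) ≤ Wr (z p (π 1))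
            ∧ Wr (z p (π 1)) ≤ Wr (z p (π 0)) then
          ∏ i, (wt (t i) (z p i) * G' i (z p i)) else 0))
      ≤ Cp π * (nrm (G 0) * nrm (G 1) * nrm (G 2) * nrm (G 3)) := by
    intro π
    have hv : ∀ p, -(z p (π 2) + z p (π 3) + z p (π 1)) = z p (π 0) := by
      intro p
      have hperm : z p (π 0) + z p (π 1) + z p (π 2) + z p (π 3) = 0 := by
        have hcomp := Equiv.sum_comp π (z p)
        rw [Fin.sum_univ_four, Fin.sum_univ_four] at hcomp
        rw [hcomp, hzsum p]
      have h1 : z p (π 0) + (z p (π 2) + z p (π 3) + z p (π 1)) = 0 := by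
        rw [← hperm]; abel
      exact neg_eq_of_add_eq_zero_left h1
    set f : ((Fin d → ℤ) × (Fin d → ℤ) × (Fin d → ℤ)) → ℝ≥0∞ := fun q =>
      (if Wr q.1 ≤ Wr q.2.2 ∧ Wr q.2.1 ≤ Wr q.2.2
          ∧ Wr q.2.2 ≤ Wr (-(q.1+q.2.1+q.2.2)) then
        wt ((t ∘ π) 0) (-(q.1+q.2.1+q.2.2)) * wt ((t ∘ π) 1) q.2.2
          * wt ((t ∘ π) 2) q.1 * wt ((t ∘ π) 3) q.2.1
      else 0) * (G' ∘ π) 2 q.1 * (G' ∘ π) 3 q.2.1 * (G' ∘ π) 1 q.2.2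
        * (G' ∘ π) 0 (-(q.1+q.2.1+q.2.2)) with hf
    set Φ : ((Fin d → ℤ) × (Fin d → ℤ) × (Fin d → ℤ))
        → ((Fin d → ℤ) × (Fin d → ℤ) × (Fin d → ℤ)) :=
      fun p => (z p (π 2), z p (π 3), z p (π 1)) with hΦ
    have hΦinj : Function.Injective Φ := by
      intro p p' h
      rw [hΦ] at h
      simp only [Prod.mk.injEq] at h
      obtain ⟨h2, h3, h1⟩ := h
      have h0 : z p (π 0) = z p' (π 0) := by rw [← hv p, ← hv p', h1, h2, h3]
      have hall : ∀ i, z p i = z p' i := by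
        intro i
        obtain ⟨j, hj⟩ : ∃ j, π j = i := ⟨π.symm i, π.apply_symm_apply i⟩
        rw [← hj]
        fin_cases j
        · exact h0
        · exact h1
        · exact h2
        · exact h3
      have e0 : p.1 = p'.1 := by have := hall 0; rwa [hz0, hz0] at this
      have e1 : p.2.1 = p'.2.1 := by have := hall 1; rwa [hz1, hz1] at this
      have e2 : p.2.2 = p'.2.2 := by have := hall 2; rwa [hz2, hz2] at this
      exact Prod.ext e0 (Prod.ext e1 e2)
    have hterm2 : ∀ p, (if Wr (z p (π 2)) ≤ Wr (z p (π 1)) ∧ Wr (z p (π 3)) ≤ Wr (z p (π 1))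
          ∧ Wr (z p (π 1)) ≤ Wr (z p (π 0)) then
        ∏ i, (wt (t i) (z p i) * G' i (z p i)) else 0) = f (Φ p) := by
      intro p
      rw [hf, hΦ]
      simp only
      rw [hv p]
      by_cases hc : Wr (z p (π 2)) ≤ Wr (z p (π 1)) ∧ Wr (z p (π 3)) ≤ Wr (z p (π 1))
          ∧ Wr (z p (π 1)) ≤ Wr (z p (π 0))
      · rw [if_pos hc, if_pos hc]
        have hprod : ∏ i, (wt (t i) (z p i) * G' i (z p i))
            = ∏ j, (wt (t (π j)) (z p (π j)) * G' (π j) (z p (π j))) :=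
          (Equiv.prod_comp π (fun i => wt (t i) (z p i) * G' i (z p i))).symm
        rw [hprod, Fin.prod_univ_four]
        simp only [Function.comp_apply]
        ring
      · rw [if_neg hc, if_neg hc]
        simp
    calc (∑' p : (Fin d → ℤ) × (Fin d → ℤ) × (Fin d → ℤ),
          (if Wr (z p (π 2)) ≤ Wr (z p (π 1)) ∧ Wr (z p (π 3)) ≤ Wr (z p (π 1))
              ∧ Wr (z p (π 1)) ≤ Wr (z p (π 0)) then
            ∏ i, (wt (t i) (z p i) * G' i (z p i)) else 0))
        = ∑' p, f (Φ p) := tsum_congr hterm2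
      _ ≤ ∑' q, f q := ENNReal.tsum_comp_le_tsum_of_injective hΦinj f
      _ ≤ Cp π * (nrm ((G' ∘ π) 0) * nrm ((G' ∘ π) 1) * nrm ((G' ∘ π) 2) * nrm ((G' ∘ π) 3)) :=
          hCp π (G' ∘ π)
      _ = Cp π * (nrm (G 0) * nrm (G 1) * nrm (G 2) * nrm (G 3)) := by
          congr 1
          have hp4 : nrm ((G' ∘ π) 0) * nrm ((G' ∘ π) 1) * nrm ((G' ∘ π) 2) * nrm ((G' ∘ π) 3)
              = ∏ j, nrm (G' (π j)) := by
            rw [Fin.prod_univ_four]; simp only [Function.comp_apply]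
          rw [hp4, Equiv.prod_comp π (fun i => nrm (G' i)), Fin.prod_univ_four,
            hnrmG' 0, hnrmG' 1, hnrmG' 2, hnrmG' 3]
  calc (∑' p : (Fin d → ℤ) × (Fin d → ℤ) × (Fin d → ℤ),
        (wt (t 0) p.1 * wt (t 1) p.2.1 * wt (t 2) p.2.2 * wt (t 3) (p.1+p.2.1+p.2.2))
        * (G 0 p.1 * G 1 p.2.1 * G 2 p.2.2 * G 3 (p.1+p.2.1+p.2.2)))
      = ∑' p : (Fin d → ℤ) × (Fin d → ℤ) × (Fin d → ℤ),
          ∏ i, (wt (t i) (z p i) * G' i (z p i)) := tsum_congr hterm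
    _ ≤ ∑' p : (Fin d → ℤ) × (Fin d → ℤ) × (Fin d → ℤ),
          ∑ π : Equiv.Perm (Fin 4),
          (if Wr (z p (π 2)) ≤ Wr (z p (π 1)) ∧ Wr (z p (π 3)) ≤ Wr (z p (π 1))
              ∧ Wr (z p (π 1)) ≤ Wr (z p (π 0)) then
            ∏ i, (wt (t i) (z p i) * G' i (z p i)) else 0) := ENNReal.tsum_le_tsum hcover
    _ = ∑ π : Equiv.Perm (Fin 4), ∑' p : (Fin d → ℤ) × (Fin d → ℤ) × (Fin d → ℤ),
          (if Wr (z p (π 2)) ≤ Wr (z p (π 1)) ∧ Wr (z p (π 3)) ≤ Wr (z p (π 1))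
              ∧ Wr (z p (π 1)) ≤ Wr (z p (π 0)) then
            ∏ i, (wt (t i) (z p i) * G' i (z p i)) else 0) :=
        Summable.tsum_finsetSum (fun _ _ => ENNReal.summable)
    _ ≤ ∑ π : Equiv.Perm (Fin 4), Cp π * (nrm (G 0) * nrm (G 1) * nrm (G 2) * nrm (G 3)) :=
        Finset.sum_le_sum (fun π _ => hper π)
    _ = (∑ π : Equiv.Perm (Fin 4), Cp π) * (nrm (G 0) * nrm (G 1) * nrm (G 2) * nrm (G 3)) :=
        (Finset.sum_mul _ _ _).symm

lemma rpow_half_sq (x : ℝ≥0∞) : (x ^ 2 : ℝ≥0∞) ^ (1/2:ℝ) = x := by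
  rw [← ENNReal.rpow_natCast x 2, ← ENNReal.rpow_mul]
  norm_num

lemma enorm_tsum_le {α : Type*} (h : α → ℂ) :
    (‖∑' a, h a‖₊ : ℝ≥0∞) ≤ ∑' a, (‖h a‖₊ : ℝ≥0∞) := by
  by_cases hs : Summable (fun a => ‖h a‖₊)
  · rw [← ENNReal.coe_tsum hs]
    exact_mod_cast nnnorm_tsum_le hs
  · have htop : ∑' a, (‖h a‖₊ : ℝ≥0∞) = ⊤ := by
      by_contra hne
      exact hs (ENNReal.tsum_coe_ne_top_iff_summable.mp hne)
    rw [htop]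
    exact le_top

lemma sobNorm_eq (s : ℝ) (f : (Fin d → ℤ) → ℂ) :
    sobNorm d s f = nrm (fun ξ => wt (s/2) ξ * (‖f ξ‖₊ : ℝ≥0∞)) := by
  unfold sobNorm nrm
  congr 1
  refine tsum_congr fun ξ => ?_
  have h1 : sobWeight s ξ = Wr ξ ^ s := rfl
  rw [h1, ENNReal.ofReal_mul (Real.rpow_nonneg (Wr_pos ξ).le s),
    ENNReal.ofReal_pow (norm_nonneg _), ofReal_norm]
  rw [mul_pow, pow_two (wt (s/2) ξ), wt_mul]
  norm_num
  rfl

lemma sobNorm_eq' (s : ℝ) (f : (Fin d → ℤ) → ℂ) :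
    sobNorm d s f = (∑' ξ : Fin d → ℤ, wt s ξ * ((‖f ξ‖₊ : ℝ≥0∞))^2) ^ (1/2:ℝ) := by
  unfold sobNorm
  congr 1
  refine tsum_congr fun ξ => ?_
  have h1 : sobWeight s ξ = Wr ξ ^ s := rfl
  rw [h1, ENNReal.ofReal_mul (Real.rpow_nonneg (Wr_pos ξ).le s),
    ENNReal.ofReal_pow (norm_nonneg _), ofReal_norm]
  rfl

end TriProd

open TriProd

/-- For `s ∈ (-d/2, d/2)` and `f₁, f₂, f₃ ∈ H^{(s+d)/3}(𝕋ᵈ)`,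
`‖f₁ f₂ f₃‖_{Hˢ} ≲ ∏ ‖f_j‖_{H^{(s+d)/3}}`, the constant depending only on `s, d`. -/
theorem stmt_2 (d : ℕ) (hd : 0 < d) (s : ℝ)
    (hs₁ : -((d : ℝ)/2) < s) (hs₂ : s < (d : ℝ)/2) :
    ∃ C : ℝ, 0 < C ∧ ∀ f₁ f₂ f₃ : (Fin d → ℤ) → ℂ,
      sobNorm d ((s + d)/3) f₁ ≠ ⊤ → sobNorm d ((s + d)/3) f₂ ≠ ⊤ →
      sobNorm d ((s + d)/3) f₃ ≠ ⊤ →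
      sobNorm d s (tripleProd d f₁ f₂ f₃) ≤
        ENNReal.ofReal C * sobNorm d ((s + d)/3) f₁ * sobNorm d ((s + d)/3) f₂ *
          sobNorm d ((s + d)/3) f₃ := by
  classical
  have hd' : (0:ℝ) < d := by exact_mod_cast hd
  set σ : ℝ := (s + (d:ℝ))/3 with hσ
  set t : Fin 4 → ℝ := ![-(σ/2), -(σ/2), -(σ/2), s/2] with htdef
  have ht0 : t 0 = -(σ/2) := rfl
  have ht1 : t 1 = -(σ/2) := rfl
  have ht2 : t 2 = -(σ/2) := rfl
  have ht3 : t 3 = s/2 := rfl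
  have ht : ∀ i, -((d:ℝ)/4) < t i := by
    intro i
    fin_cases i
    · show -((d:ℝ)/4) < -(σ/2)
      rw [hσ]; linarith
    · show -((d:ℝ)/4) < -(σ/2)
      rw [hσ]; linarith
    · show -((d:ℝ)/4) < -(σ/2)
      rw [hσ]; linarith
    · show -((d:ℝ)/4) < s/2
      linarith
  have hsum : ∑ i, t i = -((d:ℝ)/2) := by
    rw [Fin.sum_univ_four, ht0, ht1, ht2, ht3, hσ]
    ring
  obtain ⟨CQ, hCQtop, hCQ⟩ := main_quad hd t ht hsum
  refine ⟨CQ.toReal + 1, by positivity, ?_⟩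
  intro f₁ f₂ f₃ _ _ _
  set nn1 : (Fin d → ℤ) → ℝ≥0∞ := fun ξ => (‖f₁ ξ‖₊ : ℝ≥0∞) with hnn1
  set nn2 : (Fin d → ℤ) → ℝ≥0∞ := fun ξ => (‖f₂ ξ‖₊ : ℝ≥0∞) with hnn2
  set nn3 : (Fin d → ℤ) → ℝ≥0∞ := fun ξ => (‖f₃ ξ‖₊ : ℝ≥0∞) with hnn3
  set F1 : (Fin d → ℤ) → ℝ≥0∞ := fun ξ => wt (σ/2) ξ * nn1 ξ with hF1
  set F2 : (Fin d → ℤ) → ℝ≥0∞ := fun ξ => wt (σ/2) ξ * nn2 ξ with hF2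
  set F3 : (Fin d → ℤ) → ℝ≥0∞ := fun ξ => wt (σ/2) ξ * nn3 ξ with hF3
  set g : (Fin d → ℤ) → ℂ := tripleProd d f₁ f₂ f₃ with hg
  set nng : (Fin d → ℤ) → ℝ≥0∞ := fun ξ => (‖g ξ‖₊ : ℝ≥0∞) with hnng
  have hP1 : sobNorm d σ f₁ = nrm F1 := sobNorm_eq σ f₁
  have hP2 : sobNorm d σ f₂ = nrm F2 := sobNorm_eq σ f₂
  have hP3 : sobNorm d σ f₃ = nrm F3 := sobNorm_eq σ f₃
  have hzero : ∀ x : Fin d → ℤ, wt (-(σ/2)) x * wt (σ/2) x = 1 := by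
    intro x
    rw [wt_mul, show -(σ/2) + σ/2 = 0 by ring, wt_zero]
  -- pointwise bound on the coefficients of the triple product
  have hgle : ∀ ξ : Fin d → ℤ, nng ξ
      ≤ ∑' q : (Fin d → ℤ) × (Fin d → ℤ), nn1 q.1 * nn2 q.2 * nn3 (ξ - q.1 - q.2) := by
    intro ξ
    calc nng ξ ≤ ∑' q : (Fin d → ℤ) × (Fin d → ℤ),
          (‖f₁ q.1 * f₂ q.2 * f₃ (ξ - q.1 - q.2)‖₊ : ℝ≥0∞) := enorm_tsum_le _
      _ = ∑' q : (Fin d → ℤ) × (Fin d → ℤ), nn1 q.1 * nn2 q.2 * nn3 (ξ - q.1 - q.2) := by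
          refine tsum_congr fun q => ?_
          rw [nnnorm_mul, nnnorm_mul, ENNReal.coe_mul, ENNReal.coe_mul]
  -- the reindexing equivalence
  set e₃ : ((Fin d → ℤ) × (Fin d → ℤ) × (Fin d → ℤ))
      ≃ ((Fin d → ℤ) × (Fin d → ℤ) × (Fin d → ℤ)) :=
    { toFun := fun p => (p.1+p.2.1+p.2.2, (p.1, p.2.1)),
      invFun := fun r => (r.2.1, r.2.2, r.1 - r.2.1 - r.2.2),
      left_inv := by
        intro p
        refine Prod.ext rfl (Prod.ext rfl ?_)
        show p.1+p.2.1+p.2.2 - p.1 - p.2.1 = p.2.2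
        abel,
      right_inv := by
        intro r
        refine Prod.ext ?_ rfl
        show r.2.1 + r.2.2 + (r.1 - r.2.1 - r.2.2) = r.1
        abel } with he₃
  -- truncated duality bound
  have key : ∀ A : Finset (Fin d → ℤ),
      (∑ ξ ∈ A, wt s ξ * nng ξ^2) ≤ (CQ * (nrm F1 * nrm F2 * nrm F3))^2 := by
    intro A
    set F4 : (Fin d → ℤ) → ℝ≥0∞ :=
      fun ξ => if ξ ∈ A then wt (s/2) ξ * nng ξ else 0 with hF4
    have hwhalf : ∀ ξ : Fin d → ℤ, wt (s/2) ξ * wt (s/2) ξ = wt s ξ := by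
      intro ξ; rw [wt_mul, show s/2 + s/2 = s by ring]
    have hXfin : (∑ ξ ∈ A, wt s ξ * nng ξ^2) ≠ ⊤ := by
      refine (ENNReal.sum_lt_top.mpr ?_).ne
      intro ξ _
      exact ENNReal.mul_lt_top (wt_ne_top s ξ).lt_top
        (ENNReal.pow_ne_top ENNReal.coe_ne_top).lt_top
    have hnrmF4 : nrm F4 = (∑ ξ ∈ A, wt s ξ * nng ξ^2) ^ (1/2:ℝ) := by
      unfold nrm
      congr 1
      rw [tsum_eq_sum (s := A) (f := fun ξ => F4 ξ ^ 2)
        (fun ξ hξ => by rw [hF4]; simp [hξ])]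
      refine Finset.sum_congr rfl fun ξ hξ => ?_
      rw [hF4]
      simp only [if_pos hξ]
      rw [mul_pow, pow_two (wt (s/2) ξ), hwhalf ξ]
    have hstep : (∑ ξ ∈ A, wt s ξ * nng ξ^2)
        ≤ CQ * (nrm F1 * nrm F2 * nrm F3 * nrm F4) := by
      calc (∑ ξ ∈ A, wt s ξ * nng ξ^2)
          = ∑ ξ ∈ A, F4 ξ * (wt (s/2) ξ * nng ξ) := by
            refine Finset.sum_congr rfl fun ξ hξ => ?_
            rw [hF4]
            simp only [if_pos hξ]
            rw [← hwhalf ξ, pow_two]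
            ring
        _ ≤ ∑' ξ : Fin d → ℤ, F4 ξ * (wt (s/2) ξ * nng ξ) := ENNReal.sum_le_tsum A
        _ ≤ ∑' ξ : Fin d → ℤ, F4 ξ * (wt (s/2) ξ
              * ∑' q : (Fin d → ℤ) × (Fin d → ℤ), nn1 q.1 * nn2 q.2 * nn3 (ξ - q.1 - q.2)) := by
            refine ENNReal.tsum_le_tsum fun ξ => ?_
            exact mul_le_mul_right (mul_le_mul_right (hgle ξ) _) _
        _ = ∑' ξ : Fin d → ℤ, ∑' q : (Fin d → ℤ) × (Fin d → ℤ),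
              F4 ξ * wt (s/2) ξ * (nn1 q.1 * nn2 q.2 * nn3 (ξ - q.1 - q.2)) := by
            refine tsum_congr fun ξ => ?_
            rw [← mul_assoc, ← ENNReal.tsum_mul_left]
        _ = ∑' r : (Fin d → ℤ) × (Fin d → ℤ) × (Fin d → ℤ),
              F4 r.1 * wt (s/2) r.1 * (nn1 r.2.1 * nn2 r.2.2 * nn3 (r.1 - r.2.1 - r.2.2)) := by
            rw [ENNReal.tsum_prod (f := fun (a : Fin d → ℤ) (b : (Fin d → ℤ) × (Fin d → ℤ)) =>
              F4 a * wt (s/2) a * (nn1 b.1 * nn2 b.2 * nn3 (a - b.1 - b.2)))]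
        _ = ∑' p : (Fin d → ℤ) × (Fin d → ℤ) × (Fin d → ℤ),
              F4 (p.1+p.2.1+p.2.2) * wt (s/2) (p.1+p.2.1+p.2.2)
                * (nn1 p.1 * nn2 p.2.1 * nn3 ((p.1+p.2.1+p.2.2) - p.1 - p.2.1)) :=
            (e₃.tsum_eq (fun r => F4 r.1 * wt (s/2) r.1
              * (nn1 r.2.1 * nn2 r.2.2 * nn3 (r.1 - r.2.1 - r.2.2)))).symm
        _ = ∑' p : (Fin d → ℤ) × (Fin d → ℤ) × (Fin d → ℤ),
              (wt (t 0) p.1 * wt (t 1) p.2.1 * wt (t 2) p.2.2 * wt (t 3) (p.1+p.2.1+p.2.2))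
              * (F1 p.1 * F2 p.2.1 * F3 p.2.2 * F4 (p.1+p.2.1+p.2.2)) := by
            refine tsum_congr fun p => ?_
            have harg : (p.1+p.2.1+p.2.2) - p.1 - p.2.1 = p.2.2 := by abel
            rw [harg, ht0, ht1, ht2, ht3, hF1, hF2, hF3]
            calc F4 (p.1+p.2.1+p.2.2) * wt (s/2) (p.1+p.2.1+p.2.2)
                  * (nn1 p.1 * nn2 p.2.1 * nn3 p.2.2)
                = (wt (-(σ/2)) p.1 * wt (σ/2) p.1)
                  * ((wt (-(σ/2)) p.2.1 * wt (σ/2) p.2.1)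
                    * ((wt (-(σ/2)) p.2.2 * wt (σ/2) p.2.2)
                      * (F4 (p.1+p.2.1+p.2.2) * wt (s/2) (p.1+p.2.1+p.2.2)
                        * (nn1 p.1 * nn2 p.2.1 * nn3 p.2.2)))) := by
                  rw [hzero p.1, hzero p.2.1, hzero p.2.2, one_mul, one_mul, one_mul]
              _ = _ := by ring
        _ ≤ CQ * (nrm F1 * nrm F2 * nrm F3 * nrm F4) :=
            hCQ ![F1, F2, F3, F4]
    rcases eq_or_ne (∑ ξ ∈ A, wt s ξ * nng ξ^2) 0 with h0 | h0
    · rw [h0]; exact zero_le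
    · have hc : (∑ ξ ∈ A, wt s ξ * nng ξ^2) ^ (1/2:ℝ) ≠ 0 := by
        rw [Ne, ENNReal.rpow_eq_zero_iff]
        rintro (⟨hx, _⟩ | ⟨hx, _⟩)
        · exact h0 hx
        · exact hXfin hx
      have hct : (∑ ξ ∈ A, wt s ξ * nng ξ^2) ^ (1/2:ℝ) ≠ ⊤ :=
        ENNReal.rpow_ne_top_of_nonneg (by norm_num) hXfin
      have hXsplit : (∑ ξ ∈ A, wt s ξ * nng ξ^2)
          = (∑ ξ ∈ A, wt s ξ * nng ξ^2) ^ (1/2:ℝ) * (∑ ξ ∈ A, wt s ξ * nng ξ^2) ^ (1/2:ℝ) := by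
        rw [← ENNReal.rpow_add _ _ h0 hXfin]
        norm_num
      have hle : (∑ ξ ∈ A, wt s ξ * nng ξ^2) ^ (1/2:ℝ) * (∑ ξ ∈ A, wt s ξ * nng ξ^2) ^ (1/2:ℝ)
          ≤ (CQ * (nrm F1 * nrm F2 * nrm F3)) * (∑ ξ ∈ A, wt s ξ * nng ξ^2) ^ (1/2:ℝ) := by
        calc (∑ ξ ∈ A, wt s ξ * nng ξ^2) ^ (1/2:ℝ) * (∑ ξ ∈ A, wt s ξ * nng ξ^2) ^ (1/2:ℝ)
            = (∑ ξ ∈ A, wt s ξ * nng ξ^2) := hXsplit.symm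
          _ ≤ CQ * (nrm F1 * nrm F2 * nrm F3 * nrm F4) := hstep
          _ = (CQ * (nrm F1 * nrm F2 * nrm F3)) * (∑ ξ ∈ A, wt s ξ * nng ξ^2) ^ (1/2:ℝ) := by
              rw [hnrmF4]; ring
      have hhalf : (∑ ξ ∈ A, wt s ξ * nng ξ^2) ^ (1/2:ℝ) ≤ CQ * (nrm F1 * nrm F2 * nrm F3) :=
        (ENNReal.mul_le_mul_iff_left hc hct).mp hle
      calc (∑ ξ ∈ A, wt s ξ * nng ξ^2)
          = ((∑ ξ ∈ A, wt s ξ * nng ξ^2) ^ (1/2:ℝ))^2 := (sq_rpow_half _).symm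
        _ ≤ (CQ * (nrm F1 * nrm F2 * nrm F3))^2 := sq_le_sq' hhalf
  -- conclude
  have htsum : (∑' ξ : Fin d → ℤ, wt s ξ * nng ξ^2) ≤ (CQ * (nrm F1 * nrm F2 * nrm F3))^2 := by
    rw [ENNReal.tsum_eq_iSup_sum]
    exact iSup_le key
  calc sobNorm d s g = (∑' ξ : Fin d → ℤ, wt s ξ * nng ξ^2) ^ (1/2:ℝ) := sobNorm_eq' s g
    _ ≤ ((CQ * (nrm F1 * nrm F2 * nrm F3))^2) ^ (1/2:ℝ) :=
        ENNReal.rpow_le_rpow htsum (by norm_num)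
    _ = CQ * (nrm F1 * nrm F2 * nrm F3) := rpow_half_sq _
    _ ≤ ENNReal.ofReal (CQ.toReal + 1) * (nrm F1 * nrm F2 * nrm F3) := by
        gcongr
        calc CQ = ENNReal.ofReal CQ.toReal := (ENNReal.ofReal_toReal hCQtop).symm
          _ ≤ ENNReal.ofReal (CQ.toReal + 1) := ENNReal.ofReal_le_ofReal (by linarith)
    _ = ENNReal.ofReal (CQ.toReal + 1) * sobNorm d σ f₁ * sobNorm d σ f₂ * sobNorm d σ f₃ := by
        rw [hP1, hP2, hP3]; ring
end

section
/- Let $s \ge 0$, $s_1, s_2, \tilde s_1, \tilde s_2 > 0$ with $s_1 + s_2 = d/2$ and $\tilde s_1 + \tilde s_2 = d/2$. Then for $f, g$ in the appropriate Sobolev spaces on $\mathbb{T}^d$, $\| f g \|_{H^{s}(\mathbb{T}^d)} \lesssim \| f \|_{H^{s+s_1}} \| g \|_{H^{s_2}} + \| f \|_{H^{\tilde s_1}} \| g \|_{H^{s + \tilde s_2}}$. -/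
open scoped ENNReal

/-- Fourier coefficients of the product `f g` on `𝕋ᵈ`: the convolution. -/
noncomputable def pairProd (d : ℕ) (f g : (Fin d → ℤ) → ℂ) : (Fin d → ℤ) → ℂ :=
  fun ξ => ∑' η : Fin d → ℤ, f η * g (ξ - η)

open MeasureTheory

namespace Stmt4

variable {d : ℕ}

/-- sup norm as a natural number -/
def mm (ξ : Fin d → ℤ) : ℕ := Finset.univ.sup fun i => (ξ i).natAbs

/-- dyadic index -/
def KK (ξ : Fin d → ℤ) : ℕ := Nat.size (mm ξ)

lemma natAbs_le_mm (ξ : Fin d → ℤ) (i : Fin d) : (ξ i).natAbs ≤ mm ξ :=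
  Finset.le_sup (f := fun i => (ξ i).natAbs) (Finset.mem_univ i)

lemma mm_lt (ξ : Fin d → ℤ) : mm ξ < 2 ^ KK ξ := Nat.lt_size_self _

lemma mm_add (ξ η : Fin d → ℤ) : mm (ξ + η) ≤ mm ξ + mm η := by
  refine Finset.sup_le fun i _ => ?_
  have : (ξ + η) i = ξ i + η i := rfl
  rw [this]
  exact le_trans (Int.natAbs_add_le _ _) (add_le_add (natAbs_le_mm ξ i) (natAbs_le_mm η i))

lemma KK_mono {ξ η : Fin d → ℤ} (h : mm ξ ≤ mm η) : KK ξ ≤ KK η := Nat.size_le_size h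

lemma base_pos (ξ : Fin d → ℤ) : (0:ℝ) < 1 + ∑ i, ((ξ i : ℝ)) ^ 2 := by positivity

lemma sobWeight_pos (s : ℝ) (ξ : Fin d → ℤ) : 0 < sobWeight s ξ :=
  Real.rpow_pos_of_pos (base_pos ξ) s

lemma sq_cast_le (ξ : Fin d → ℤ) (i : Fin d) {n : ℕ} (h : (ξ i).natAbs ≤ n) :
    ((ξ i : ℝ)) ^ 2 ≤ (n : ℝ) ^ 2 := by
  have h1 : |(ξ i : ℝ)| = ((ξ i).natAbs : ℝ) := by
    rw [Nat.cast_natAbs, Int.cast_abs]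
  have h2 : |(ξ i : ℝ)| ≤ (n : ℝ) := by rw [h1]; exact_mod_cast h
  nlinarith [abs_nonneg ((ξ i : ℝ)), sq_abs ((ξ i : ℝ))]

lemma base_le {ξ : Fin d → ℤ} {n : ℕ} (h : mm ξ ≤ n) :
    1 + ∑ i, ((ξ i : ℝ)) ^ 2 ≤ ((d:ℝ)+1) * (1 + (n:ℝ)^2) := by
  have hsum : ∑ i, ((ξ i : ℝ)) ^ 2 ≤ (d:ℝ) * (n:ℝ)^2 := by
    calc ∑ i, ((ξ i : ℝ)) ^ 2 ≤ ∑ _i : Fin d, (n:ℝ)^2 :=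
          Finset.sum_le_sum fun i _ => sq_cast_le ξ i (le_trans (natAbs_le_mm ξ i) h)
      _ = (d:ℝ) * (n:ℝ)^2 := by simp [mul_comm]
  nlinarith [sq_nonneg (n:ℝ), Nat.cast_nonneg (α := ℝ) d]

lemma base_ge (hd : 0 < d) (ξ : Fin d → ℤ) :
    (4:ℝ) ^ (KK ξ) / 4 ≤ 1 + ∑ i, ((ξ i : ℝ)) ^ 2 := by
  rcases Nat.eq_zero_or_pos (KK ξ) with h0 | hpos
  · rw [h0]
    have : (0:ℝ) ≤ ∑ i, ((ξ i : ℝ)) ^ 2 := by positivity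
    norm_num; linarith
  · -- mm ξ ≥ 2 ^ (KK ξ - 1)
    have hm : 2 ^ (KK ξ - 1) ≤ mm ξ := by
      by_contra hcon
      push_neg at hcon
      have h2 := Nat.size_le.mpr hcon
      have h3 : KK ξ = (mm ξ).size := rfl
      omega
    -- there is i with (ξ i).natAbs = mm ξ
    obtain ⟨i, _, hi⟩ := Finset.exists_mem_eq_sup (Finset.univ : Finset (Fin d))
      (Finset.univ_nonempty_iff.mpr ⟨⟨0, hd⟩⟩) fun i => (ξ i).natAbs
    have hterm : ((mm ξ : ℝ))^2 ≤ ∑ j, ((ξ j : ℝ)) ^ 2 := by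
      have : ((mm ξ : ℝ))^2 = ((ξ i : ℝ))^2 := by
        have : ((ξ i : ℝ))^2 = ((ξ i).natAbs : ℝ)^2 := by
          rw [Nat.cast_natAbs, Int.cast_abs, sq_abs]
        rw [this, mm, hi]
      rw [this]
      exact Finset.single_le_sum (f := fun j => ((ξ j : ℝ))^2) (fun j _ => by positivity)
        (Finset.mem_univ i)
    have h4 : (4:ℝ) ^ KK ξ / 4 ≤ ((mm ξ : ℝ))^2 := by
      have : ((2:ℝ) ^ (KK ξ - 1)) ≤ (mm ξ : ℝ) := by exact_mod_cast hm
      have hsq : ((2:ℝ) ^ (KK ξ - 1))^2 ≤ ((mm ξ : ℝ))^2 := by nlinarith [pow_nonneg (by norm_num : (0:ℝ) ≤ 2) (KK ξ - 1)]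
      have h2 : ((2:ℝ) ^ (KK ξ - 1))^2 = (4:ℝ) ^ (KK ξ - 1) := by
        rw [← pow_mul, mul_comm, pow_mul]; norm_num
      have h3 : (4:ℝ) ^ KK ξ = 4 * (4:ℝ) ^ (KK ξ - 1) := by
        rw [← pow_succ']
        congr 1
        omega
      rw [h3] at *
      nlinarith
    have : (0:ℝ) ≤ 1 := by norm_num
    linarith [hterm, h4]

lemma sobWeight_le {σ : ℝ} (hσ : 0 ≤ σ) {ξ : Fin d → ℤ} {n : ℕ} (h : mm ξ ≤ n) :
    sobWeight σ ξ ≤ (((d:ℝ)+1) * (1 + (n:ℝ)^2)) ^ σ :=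
  Real.rpow_le_rpow (le_of_lt (base_pos ξ)) (base_le h) hσ

lemma sobWeight_ge (hd : 0 < d) {σ : ℝ} (hσ : 0 ≤ σ) (ξ : Fin d → ℤ) :
    ((4:ℝ) ^ (KK ξ) / 4) ^ σ ≤ sobWeight σ ξ :=
  Real.rpow_le_rpow (by positivity) (base_ge hd ξ) hσ

end Stmt4

namespace Stmt4

variable {d : ℕ}

lemma rpow_two_eq (x : ℝ≥0∞) : x ^ (2:ℝ) = x ^ (2:ℕ) := by
  rw [show (2:ℝ) = ((2:ℕ):ℝ) by norm_num, ENNReal.rpow_natCast]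

lemma sqrt_sq_eq (x : ℝ≥0∞) : (x ^ (2:ℕ)) ^ (1/2:ℝ) = x := by
  rw [← ENNReal.rpow_natCast x 2, ← ENNReal.rpow_mul]
  norm_num

noncomputable def W (d : ℕ) (s : ℝ) (ξ : Fin d → ℤ) : ℝ≥0∞ := ENNReal.ofReal (sobWeight s ξ)

lemma W_ne_zero (s : ℝ) (ξ : Fin d → ℤ) : W d s ξ ≠ 0 := by
  simp [W, ENNReal.ofReal_eq_zero, not_le, sobWeight_pos s ξ]

lemma W_ne_top (s : ℝ) (ξ : Fin d → ℤ) : W d s ξ ≠ ⊤ := ENNReal.ofReal_ne_top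

noncomputable def Q (d : ℕ) (s : ℝ) (a : (Fin d → ℤ) → ℝ≥0∞) : ℝ≥0∞ :=
  ∑' ξ, W d s ξ * a ξ ^ 2

noncomputable def GN (d : ℕ) (s : ℝ) (a : (Fin d → ℤ) → ℝ≥0∞) : ℝ≥0∞ :=
  (Q d s a) ^ (1/2 : ℝ)

lemma GN_sq (s : ℝ) (a : (Fin d → ℤ) → ℝ≥0∞) : GN d s a ^ (2:ℕ) = Q d s a := by
  rw [GN, ← ENNReal.rpow_natCast _ 2, ← ENNReal.rpow_mul]
  norm_num

lemma sobNorm_eq (s : ℝ) (f : (Fin d → ℤ) → ℂ) :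
    sobNorm d s f = GN d s (fun ξ => (‖f ξ‖₊ : ℝ≥0∞)) := by
  rw [sobNorm, GN, Q]
  congr 1
  apply tsum_congr
  intro ξ
  rw [ENNReal.ofReal_mul (le_of_lt (sobWeight_pos s ξ)), ENNReal.ofReal_pow (norm_nonneg _),
    ofReal_norm, enorm_eq_nnnorm]
  rfl

lemma Q_mono (s : ℝ) {a b : (Fin d → ℤ) → ℝ≥0∞} (h : ∀ ξ, a ξ ≤ b ξ) :
    Q d s a ≤ Q d s b :=
  ENNReal.tsum_le_tsum fun ξ => mul_le_mul_right (pow_le_pow_left' (h ξ) 2) _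

lemma GN_mono (s : ℝ) {a b : (Fin d → ℤ) → ℝ≥0∞} (h : ∀ ξ, a ξ ≤ b ξ) :
    GN d s a ≤ GN d s b :=
  ENNReal.rpow_le_rpow (Q_mono s h) (by norm_num)

/-- Cauchy-Schwarz for ENNReal-valued tsums. -/
lemma tsum_CS {α : Type*} [Countable α] [MeasurableSpace α] [MeasurableSingletonClass α]
    (u v : α → ℝ≥0∞) :
    ∑' x, u x * v x ≤ (∑' x, u x ^ 2) ^ (1/2:ℝ) * (∑' x, v x ^ 2) ^ (1/2:ℝ) := by
  have hpq : Real.HolderConjugate 2 2 := by constructor <;> norm_num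
  have h := ENNReal.lintegral_mul_le_Lp_mul_Lq (Measure.count (α := α)) hpq
    (measurable_of_countable u).aemeasurable (measurable_of_countable v).aemeasurable
  rw [lintegral_count] at h
  simp only [Pi.mul_apply] at h
  calc ∑' x, u x * v x ≤ (∫⁻ x, u x ^ (2:ℝ) ∂Measure.count) ^ (1/2:ℝ) *
        (∫⁻ x, v x ^ (2:ℝ) ∂Measure.count) ^ (1/2:ℝ) := h
    _ = (∑' x, u x ^ 2) ^ (1/2:ℝ) * (∑' x, v x ^ 2) ^ (1/2:ℝ) := by
        rw [lintegral_count, lintegral_count]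
        simp only [rpow_two_eq]

lemma sup_sq {u : ℕ → ℝ≥0∞} (hu : Monotone u) : (⨆ n, u n) ^ (2:ℕ) = ⨆ n, (u n) ^ (2:ℕ) := by
  apply le_antisymm
  · rw [pow_two, ENNReal.iSup_mul]
    refine iSup_le fun n => ?_
    rw [ENNReal.mul_iSup]
    refine iSup_le fun m => ?_
    calc u n * u m ≤ u (max n m) * u (max n m) :=
          mul_le_mul' (hu (le_max_left n m)) (hu (le_max_right n m))
      _ = u (max n m) ^ 2 := (pow_two _).symm
      _ ≤ ⨆ k, (u k) ^ 2 := le_iSup (fun k => (u k)^2) _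
  · exact iSup_le fun n => pow_le_pow_left' (le_iSup u n) 2

lemma Q_eq_lintegral (s : ℝ) (h : (Fin d → ℤ) → ℝ≥0∞) :
    Q d s h = ∫⁻ ξ, ((W d s ξ) ^ (1/2:ℝ) * h ξ) ^ (2:ℝ) ∂Measure.count := by
  rw [lintegral_count, Q]
  apply tsum_congr
  intro ξ
  rw [ENNReal.mul_rpow_of_nonneg _ _ (by norm_num : (0:ℝ) ≤ 2), ← ENNReal.rpow_mul,
    rpow_two_eq]
  norm_num

/-- two-term Minkowski for GN -/
lemma GN_add (s : ℝ) (u v : (Fin d → ℤ) → ℝ≥0∞) :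
    GN d s (fun ξ => u ξ + v ξ) ≤ GN d s u + GN d s v := by
  rw [GN, GN, GN, Q_eq_lintegral, Q_eq_lintegral, Q_eq_lintegral]
  have h2 : (1:ℝ) ≤ 2 := by norm_num
  have hmink := ENNReal.lintegral_Lp_add_le
    (f := fun ξ => (W d s ξ) ^ (1/2:ℝ) * u ξ) (g := fun ξ => (W d s ξ) ^ (1/2:ℝ) * v ξ)
    (μ := Measure.count)
    (measurable_of_countable _).aemeasurable (measurable_of_countable _).aemeasurable h2
  refine le_trans (le_of_eq ?_) hmink
  congr 1
  apply lintegral_congr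
  intro ξ
  simp only [Pi.add_apply]
  rw [mul_add]

lemma Q_zero (s : ℝ) : Q d s (fun _ => 0) = 0 := by simp [Q]

lemma GN_zero (s : ℝ) : GN d s (fun _ => 0) = 0 := by
  rw [GN, Q_zero]
  exact ENNReal.zero_rpow_of_pos (by norm_num)

/-- Minkowski for countable sums -/
lemma GN_tsum_le {ι : Type*} [Countable ι] (s : ℝ) (F : ι → (Fin d → ℤ) → ℝ≥0∞) :
    GN d s (fun ξ => ∑' i, F i ξ) ≤ ∑' i, GN d s (F i) := by
  classical
  have hfin : ∀ (t : Finset ι), GN d s (fun ξ => ∑ i ∈ t, F i ξ) ≤ ∑ i ∈ t, GN d s (F i) := by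
    intro t
    induction t using Finset.induction_on with
    | empty => simp [GN_zero]
    | insert a t' hnotmem ih =>
        calc GN d s (fun ξ => ∑ i ∈ insert a t', F i ξ)
            = GN d s (fun ξ => F a ξ + ∑ i ∈ t', F i ξ) := by
              congr 1; funext ξ; rw [Finset.sum_insert hnotmem]
          _ ≤ GN d s (F a) + GN d s (fun ξ => ∑ i ∈ t', F i ξ) := GN_add s _ _
          _ ≤ GN d s (F a) + ∑ i ∈ t', GN d s (F i) := add_le_add_right ih _
          _ = ∑ i ∈ insert a t', GN d s (F i) := by rw [Finset.sum_insert hnotmem]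
  set L := ∑' i, GN d s (F i) with hL
  rw [GN]
  have hQ : Q d s (fun ξ => ∑' i, F i ξ) ≤ L ^ (2:ℕ) := by
    rcases isEmpty_or_nonempty ι with hι | hι
    · simp only [tsum_empty]
      rw [Q_zero]
      exact zero_le
    · obtain ⟨e, he⟩ := exists_surjective_nat ι
      set g := Function.surjInv he with hgdef
      have hg : ∀ x, e (g x) = x := fun x => Function.surjInv_eq he x
      have htsum : ∀ (h : ι → ℝ≥0∞),
          ∑' i, h i = ⨆ N, ∑ i ∈ (Finset.range N).image e, h i := by
        intro h
        apply ENNReal.tsum_eq_iSup_sum' (fun N => (Finset.range N).image e)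
        intro t
        refine ⟨t.sup g + 1, fun x hx => Finset.mem_image.mpr
          ⟨g x, Finset.mem_range.mpr (Nat.lt_succ_of_le (Finset.le_sup hx)), hg x⟩⟩
      have hSmono : ∀ ξ, Monotone (fun N => ∑ i ∈ (Finset.range N).image e, F i ξ) := by
        intro ξ N M hNM
        exact Finset.sum_le_sum_of_subset
          (Finset.image_subset_image (Finset.range_subset_range.mpr hNM))
      have step1 : Q d s (fun ξ => ∑' i, F i ξ)
          = ⨆ N, Q d s (fun ξ => ∑ i ∈ (Finset.range N).image e, F i ξ) := by
        rw [Q]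
        have e1 : ∀ ξ, W d s ξ * (∑' i, F i ξ) ^ (2:ℕ)
            = ⨆ N, W d s ξ * (∑ i ∈ (Finset.range N).image e, F i ξ) ^ (2:ℕ) := by
          intro ξ
          rw [htsum (fun i => F i ξ), sup_sq (hSmono ξ), ENNReal.mul_iSup]
        calc ∑' ξ, W d s ξ * (∑' i, F i ξ) ^ (2:ℕ)
            = ∑' ξ, ⨆ N, W d s ξ * (∑ i ∈ (Finset.range N).image e, F i ξ) ^ (2:ℕ) :=
              tsum_congr e1
          _ = ⨆ N, ∑' ξ, W d s ξ * (∑ i ∈ (Finset.range N).image e, F i ξ) ^ (2:ℕ) := by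
              rw [← lintegral_count]
              rw [lintegral_iSup (fun N => measurable_of_countable _)]
              · exact iSup_congr fun N => lintegral_count _
              · intro N M hNM ξ
                exact mul_le_mul_right (pow_le_pow_left' (hSmono ξ hNM) 2) _
          _ = ⨆ N, Q d s (fun ξ => ∑ i ∈ (Finset.range N).image e, F i ξ) := rfl
      rw [step1]
      refine iSup_le fun N => ?_
      calc Q d s (fun ξ => ∑ i ∈ (Finset.range N).image e, F i ξ)
          = GN d s (fun ξ => ∑ i ∈ (Finset.range N).image e, F i ξ) ^ (2:ℕ) :=
            (GN_sq _ _).symm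
        _ ≤ (∑ i ∈ (Finset.range N).image e, GN d s (F i)) ^ (2:ℕ) :=
            pow_le_pow_left' (hfin _) 2
        _ ≤ L ^ (2:ℕ) := pow_le_pow_left' (ENNReal.sum_le_tsum _) 2
  calc (Q d s fun ξ => ∑' i, F i ξ) ^ (1/2:ℝ) ≤ (L ^ (2:ℕ)) ^ (1/2:ℝ) :=
        ENNReal.rpow_le_rpow hQ (by norm_num)
    _ = L := sqrt_sq_eq L

end Stmt4

namespace Stmt4

variable {d : ℕ}

lemma sq_half (x : ℝ≥0∞) : (x ^ (1/2:ℝ)) ^ (2:ℕ) = x := by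
  rw [← ENNReal.rpow_natCast (x ^ (1/2:ℝ)) 2, ← ENNReal.rpow_mul]
  norm_num

lemma half_mul_self (x : ℝ≥0∞) : x ^ (1/2:ℝ) * x ^ (1/2:ℝ) = x := by
  rw [← pow_two]
  exact sq_half x

noncomputable def conv (A B : (Fin d → ℤ) → ℝ≥0∞) (ξ : Fin d → ℤ) : ℝ≥0∞ :=
  ∑' η, A η * B (ξ - η)

noncomputable def conv₁ (a b : (Fin d → ℤ) → ℝ≥0∞) (ξ : Fin d → ℤ) : ℝ≥0∞ :=
  ∑' η, if KK (ξ - η) ≤ KK η then a η * b (ξ - η) else 0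

noncomputable def blk (a : (Fin d → ℤ) → ℝ≥0∞) (k : ℕ) (η : Fin d → ℤ) : ℝ≥0∞ :=
  if KK η = k then a η else 0

noncomputable def Qblk (d : ℕ) (σ : ℝ) (a : (Fin d → ℤ) → ℝ≥0∞) (k : ℕ) : ℝ≥0∞ :=
  ∑' ξ, if KK ξ = k then W d σ ξ * a ξ ^ 2 else 0

lemma Qblk_eq (σ : ℝ) (a : (Fin d → ℤ) → ℝ≥0∞) (k : ℕ) :
    Qblk d σ a k = Q d σ (blk a k) := by
  rw [Qblk, Q]
  apply tsum_congr
  intro ξ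
  by_cases h : KK ξ = k <;> simp [blk, h]

lemma Qblk_sum (σ : ℝ) (a : (Fin d → ℤ) → ℝ≥0∞) :
    ∑' k, Qblk d σ a k = Q d σ a := by
  rw [Q, ← ENNReal.tsum_fiberwise (fun ξ => W d σ ξ * a ξ ^ 2) KK]
  apply tsum_congr
  intro k
  rw [Qblk, tsum_subtype (KK ⁻¹' {k}) (fun ξ => W d σ ξ * a ξ ^ 2)]
  apply tsum_congr
  intro ξ
  by_cases h : KK ξ = k <;>
    simp [Set.indicator, Set.mem_preimage, Set.mem_singleton_iff, h]

/-- translation invariance of tsum -/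
lemma tsum_shift (B : (Fin d → ℤ) → ℝ≥0∞) (η : Fin d → ℤ) :
    ∑' ξ : Fin d → ℤ, B (ξ - η) = ∑' ξ, B ξ := by
  exact (Equiv.subRight η).tsum_eq B

lemma tsum_reflect_shift (B : (Fin d → ℤ) → ℝ≥0∞) (ξ : Fin d → ℤ) :
    ∑' η : Fin d → ℤ, B (ξ - η) = ∑' η, B η := by
  exact (Equiv.subLeft ξ).tsum_eq B

/-- Young's inequality `‖A ⋆ B‖₂² ≤ ‖B‖₁² ‖A‖₂²`. -/
lemma young (A B : (Fin d → ℤ) → ℝ≥0∞) :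
    ∑' ξ, (conv A B ξ) ^ (2:ℕ) ≤ (∑' ζ, B ζ) ^ (2:ℕ) * ∑' η, A η ^ (2:ℕ) := by
  have hCS : ∀ ξ, (conv A B ξ) ^ (2:ℕ)
      ≤ (∑' η, A η ^ (2:ℕ) * B (ξ - η)) * (∑' ζ, B ζ) := by
    intro ξ
    have h1 : conv A B ξ
        ≤ (∑' η, A η ^ (2:ℕ) * B (ξ - η)) ^ (1/2:ℝ) * (∑' η, B (ξ - η)) ^ (1/2:ℝ) := by
      have := tsum_CS (fun η => A η * (B (ξ - η)) ^ (1/2:ℝ))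
        (fun η => (B (ξ - η)) ^ (1/2:ℝ))
      calc conv A B ξ = ∑' η, (A η * (B (ξ - η)) ^ (1/2:ℝ)) * (B (ξ - η)) ^ (1/2:ℝ) := by
            rw [conv]
            exact tsum_congr fun η => by rw [mul_assoc, half_mul_self]
        _ ≤ (∑' η, (A η * (B (ξ - η)) ^ (1/2:ℝ)) ^ (2:ℕ)) ^ (1/2:ℝ) *
            (∑' η, ((B (ξ - η)) ^ (1/2:ℝ)) ^ (2:ℕ)) ^ (1/2:ℝ) := this
        _ = (∑' η, A η ^ (2:ℕ) * B (ξ - η)) ^ (1/2:ℝ) * (∑' η, B (ξ - η)) ^ (1/2:ℝ) := by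
            congr 2
            · exact tsum_congr fun η => by rw [mul_pow, sq_half]
            · exact tsum_congr fun η => sq_half _
    calc (conv A B ξ) ^ (2:ℕ)
        ≤ ((∑' η, A η ^ (2:ℕ) * B (ξ - η)) ^ (1/2:ℝ) * (∑' η, B (ξ - η)) ^ (1/2:ℝ)) ^ (2:ℕ) :=
          pow_le_pow_left' h1 2
      _ = (∑' η, A η ^ (2:ℕ) * B (ξ - η)) * (∑' η, B (ξ - η)) := by
          rw [mul_pow, sq_half, sq_half]
      _ = (∑' η, A η ^ (2:ℕ) * B (ξ - η)) * (∑' ζ, B ζ) := by rw [tsum_reflect_shift]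
  calc ∑' ξ, (conv A B ξ) ^ (2:ℕ)
      ≤ ∑' ξ, (∑' η, A η ^ (2:ℕ) * B (ξ - η)) * (∑' ζ, B ζ) :=
        ENNReal.tsum_le_tsum hCS
    _ = (∑' ξ, ∑' η, A η ^ (2:ℕ) * B (ξ - η)) * (∑' ζ, B ζ) := ENNReal.tsum_mul_right
    _ = (∑' η, ∑' ξ, A η ^ (2:ℕ) * B (ξ - η)) * (∑' ζ, B ζ) := by rw [ENNReal.tsum_comm]
    _ = (∑' η, A η ^ (2:ℕ) * ∑' ξ, B (ξ - η)) * (∑' ζ, B ζ) := by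
        congr 1
        exact tsum_congr fun η => ENNReal.tsum_mul_left
    _ = (∑' η, A η ^ (2:ℕ) * ∑' ζ, B ζ) * (∑' ζ, B ζ) := by
        congr 1
        exact tsum_congr fun η => by rw [tsum_shift]
    _ = (∑' ζ, B ζ) ^ (2:ℕ) * ∑' η, A η ^ (2:ℕ) := by
        rw [ENNReal.tsum_mul_right]
        ring

/-- dyadic decomposition bound for the restricted convolution -/
lemma conv₁_le_blocks (a b : (Fin d → ℤ) → ℝ≥0∞) (ξ : Fin d → ℤ) :
    conv₁ a b ξ ≤ ∑' p : ℕ × ℕ,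
      (if p.2 ≤ p.1 then conv (blk a p.1) (blk b p.2) ξ else 0) := by
  have hpt : ∀ η, (if KK (ξ - η) ≤ KK η then a η * b (ξ - η) else 0)
      ≤ ∑' p : ℕ × ℕ, (if p.2 ≤ p.1 then blk a p.1 η * blk b p.2 (ξ - η) else 0) := by
    intro η
    by_cases h : KK (ξ - η) ≤ KK η
    · rw [if_pos h]
      have : a η * b (ξ - η)
          = (if (KK η, KK (ξ - η)).2 ≤ (KK η, KK (ξ - η)).1
              then blk a (KK η, KK (ξ - η)).1 η * blk b (KK η, KK (ξ - η)).2 (ξ - η) else 0) := by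
        simp [blk, h]
      rw [this]
      exact ENNReal.le_tsum (KK η, KK (ξ - η))
    · rw [if_neg h]
      exact zero_le
  calc conv₁ a b ξ
      ≤ ∑' η, ∑' p : ℕ × ℕ, (if p.2 ≤ p.1 then blk a p.1 η * blk b p.2 (ξ - η) else 0) :=
        ENNReal.tsum_le_tsum hpt
    _ = ∑' p : ℕ × ℕ, ∑' η, (if p.2 ≤ p.1 then blk a p.1 η * blk b p.2 (ξ - η) else 0) :=
        ENNReal.tsum_comm
    _ = ∑' p : ℕ × ℕ, (if p.2 ≤ p.1 then conv (blk a p.1) (blk b p.2) ξ else 0) := by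
        apply tsum_congr
        intro p
        by_cases h : p.2 ≤ p.1 <;> simp [h, conv]

/-- counting bound: number of lattice points in dyadic block `j` -/
lemma count_blk (j : ℕ) :
    ∑' ζ : Fin d → ℤ, (if KK ζ = j then (1:ℝ≥0∞) else 0)
      ≤ (((2^(j+1)+1 : ℕ) : ℝ≥0∞)) ^ d := by
  classical
  set F : Finset (Fin d → ℤ) := Fintype.piFinset fun _ : Fin d => Finset.Icc (-(2^j : ℤ)) (2^j)
  have hsupp : ∀ ζ ∉ F, (if KK ζ = j then (1:ℝ≥0∞) else 0) = 0 := by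
    intro ζ hζ
    rw [if_neg]
    intro hKK
    apply hζ
    have hm : mm ζ < 2 ^ j := by rw [← hKK]; exact mm_lt ζ
    refine Fintype.mem_piFinset.mpr fun i => ?_
    have h1 : (ζ i).natAbs ≤ mm ζ := natAbs_le_mm ζ i
    have h2 : (ζ i).natAbs ≤ 2 ^ j := by omega
    have h3 : |ζ i| ≤ (2^j : ℤ) := by
      rw [Int.abs_eq_natAbs]
      exact_mod_cast h2
    rw [Finset.mem_Icc]
    exact ⟨neg_le_of_abs_le h3, le_of_abs_le h3⟩
  have hcard : F.card = (2^(j+1)+1 : ℕ)^d := by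
    have h1 : ((2^j:ℤ) + 1 + 2^j).toNat = (2^(j+1)+1 : ℕ) := by
      have h2 : ((2^j:ℤ) + 1 + 2^j) = ((2^(j+1)+1 : ℕ) : ℤ) := by push_cast; ring
      rw [h2, Int.toNat_natCast]
    rw [show F = Fintype.piFinset fun _ : Fin d => Finset.Icc (-(2^j : ℤ)) (2^j) from rfl,
      Fintype.card_piFinset]
    simp [Int.card_Icc]
    rw [h1]
  calc ∑' ζ : Fin d → ℤ, (if KK ζ = j then (1:ℝ≥0∞) else 0)
      = ∑ ζ ∈ F, (if KK ζ = j then (1:ℝ≥0∞) else 0) := tsum_eq_sum hsupp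
    _ ≤ ∑ _ζ ∈ F, (1:ℝ≥0∞) := Finset.sum_le_sum (fun ζ _ => by split <;> simp)
    _ = (F.card : ℝ≥0∞) := by simp
    _ ≤ (((2^(j+1)+1 : ℕ) : ℝ≥0∞)) ^ d := by
        rw [hcard]
        rw [Nat.cast_pow]

end Stmt4

namespace Stmt4

variable {d : ℕ}

lemma rpow_npow_comm {x : ℝ} (hx : 0 ≤ x) (n : ℕ) (σ : ℝ) :
    (x ^ n) ^ σ = (x ^ σ) ^ n := by
  rw [← Real.rpow_natCast x n, ← Real.rpow_mul hx, mul_comm, Real.rpow_mul hx,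
    Real.rpow_natCast]

lemma enn_npow_rpow (x : ℝ≥0∞) (n : ℕ) (σ : ℝ) : (x ^ n) ^ σ = (x ^ σ) ^ n := by
  rw [← ENNReal.rpow_natCast x n, ← ENNReal.rpow_mul, mul_comm, ENNReal.rpow_mul,
    ENNReal.rpow_natCast]

lemma W_add (x y : ℝ) (ζ : Fin d → ℤ) : W d x ζ * W d y ζ = W d (x+y) ζ := by
  rw [W, W, W, ← ENNReal.ofReal_mul (le_of_lt (sobWeight_pos x ζ))]
  congr 1
  rw [sobWeight, sobWeight, sobWeight, ← Real.rpow_add (base_pos ζ)]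

lemma W_neg_mul (x : ℝ) (ζ : Fin d → ℤ) : W d (-x) ζ * W d x ζ = 1 := by
  rw [W_add, neg_add_cancel, W, sobWeight, Real.rpow_zero, ENNReal.ofReal_one]

noncomputable def rho (σ₁ : ℝ) : ℝ≥0∞ := (ENNReal.ofReal ((4:ℝ) ^ (-σ₁))) ^ (1/2:ℝ)

noncomputable def CCb (d : ℕ) (s σ₁ σ₂ : ℝ) : ℝ≥0∞ :=
  (ENNReal.ofReal ((8*((d:ℝ)+1))^s * (4:ℝ)^d * (4:ℝ)^σ₂ * (4:ℝ)^(s+σ₁))) ^ (1/2:ℝ)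

lemma rho_lt_one {σ₁ : ℝ} (hσ₁ : 0 < σ₁) : rho σ₁ < 1 :=
  ENNReal.rpow_lt_one (ENNReal.ofReal_lt_one.mpr
    (Real.rpow_lt_one_of_one_lt_of_neg (by norm_num) (by linarith))) (by norm_num)

lemma rho_ne_top (σ₁ : ℝ) : rho σ₁ ≠ ⊤ :=
  ENNReal.rpow_ne_top_of_nonneg (by norm_num) ENNReal.ofReal_ne_top

lemma CCb_ne_top (s σ₁ σ₂ : ℝ) : CCb d s σ₁ σ₂ ≠ ⊤ :=
  ENNReal.rpow_ne_top_of_nonneg (by norm_num) ENNReal.ofReal_ne_top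

lemma real_key {s σ₁ σ₂ : ℝ} (hs : 0 ≤ s) (hσ₁ : 0 < σ₁) (hσ₂ : 0 < σ₂)
    (hsum : σ₁ + σ₂ = (d:ℝ)/2) {j k : ℕ} (hjk : j ≤ k) :
    (((d:ℝ)+1)*(1+((2^(k+1):ℕ):ℝ)^2))^s * ((2^(j+1)+1:ℕ):ℝ)^d
      * (((4:ℝ)^j/4)^σ₂)⁻¹ * (((4:ℝ)^k/4)^(s+σ₁))⁻¹
    ≤ ((8*((d:ℝ)+1))^s * (4:ℝ)^d * (4:ℝ)^σ₂ * (4:ℝ)^(s+σ₁)) * ((4:ℝ)^(-σ₁)) ^ (k-j) := by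
  have h4pos : (0:ℝ) < 4 := by norm_num
  set q : ℝ := (4:ℝ)^(-σ₁) with hqdef
  have hqpos : (0:ℝ) < q := Real.rpow_pos_of_pos h4pos _
  -- T1
  have e1 : (((2^(k+1):ℕ):ℝ))^2 = 4 * 4^k := by
    push_cast
    rw [← pow_mul, show (k+1)*2 = 2*(k+1) by ring, pow_mul]
    norm_num [pow_succ]
    ring
  have t1 : (((d:ℝ)+1)*(1+((2^(k+1):ℕ):ℝ)^2))^s ≤ (8*((d:ℝ)+1))^s * ((4:ℝ)^s)^k := by
    have h1 : (1:ℝ) ≤ 4^k := one_le_pow₀ (by norm_num)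
    have hd0 : (0:ℝ) ≤ (d:ℝ) := Nat.cast_nonneg d
    have hb : ((d:ℝ)+1)*(1+((2^(k+1):ℕ):ℝ)^2) ≤ (8*((d:ℝ)+1)) * 4^k := by
      rw [e1]; nlinarith
    calc (((d:ℝ)+1)*(1+((2^(k+1):ℕ):ℝ)^2))^s ≤ ((8*((d:ℝ)+1)) * 4^k)^s :=
        Real.rpow_le_rpow (by positivity) hb hs
      _ = (8*((d:ℝ)+1))^s * ((4:ℝ)^s)^k := by
        rw [Real.mul_rpow (by positivity) (by positivity), rpow_npow_comm (by norm_num)]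
  have t2 : ((2^(j+1)+1:ℕ):ℝ)^d ≤ (4:ℝ)^d * ((2:ℝ)^d)^j := by
    have h1 : (1:ℝ) ≤ 2^j := one_le_pow₀ (by norm_num)
    have hb : ((2^(j+1)+1:ℕ):ℝ) ≤ 4 * 2^j := by
      push_cast
      rw [pow_succ]
      nlinarith
    calc ((2^(j+1)+1:ℕ):ℝ)^d ≤ (4 * 2^j)^d := pow_le_pow_left₀ (by positivity) hb d
      _ = (4:ℝ)^d * ((2:ℝ)^d)^j := by rw [mul_pow, ← pow_mul, mul_comm j d, pow_mul]
  have t3 : (((4:ℝ)^j/4)^σ₂)⁻¹ = (4:ℝ)^σ₂ * (((4:ℝ)^σ₂)^j)⁻¹ := by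
    rw [Real.div_rpow (by positivity) (by norm_num), rpow_npow_comm (by norm_num)]
    rw [inv_div]
    ring
  have t4 : (((4:ℝ)^k/4)^(s+σ₁))⁻¹ = (4:ℝ)^(s+σ₁) * (((4:ℝ)^(s+σ₁))^k)⁻¹ := by
    rw [Real.div_rpow (by positivity) (by norm_num), rpow_npow_comm (by norm_num)]
    rw [inv_div]
    ring
  have key2 : ((4:ℝ)^s)^k * (((4:ℝ)^(s+σ₁))^k)⁻¹ * (((2:ℝ)^d)^j * (((4:ℝ)^σ₂)^j)⁻¹)
      = q^(k-j) := by
    have hx : (4:ℝ)^s / (4:ℝ)^(s+σ₁) = q := by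
      rw [← Real.rpow_sub h4pos, show s - (s+σ₁) = -σ₁ by ring]
    have h2d : ((2:ℝ))^d = (4:ℝ)^((d:ℝ)/2) := by
      have h44 : (4:ℝ) = (2:ℝ)^(2:ℝ) := by
        rw [show (2:ℝ) = ((2:ℕ):ℝ) by norm_num, Real.rpow_natCast]
        norm_num
      rw [h44, ← Real.rpow_natCast (2:ℝ) d, ← Real.rpow_mul (by norm_num)]
      congr 1
      ring
    have hy : (2:ℝ)^d / (4:ℝ)^σ₂ = q⁻¹ := by
      rw [h2d, ← Real.rpow_sub h4pos, hqdef, ← Real.rpow_neg (le_of_lt h4pos)]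
      congr 1
      linarith
    calc ((4:ℝ)^s)^k * (((4:ℝ)^(s+σ₁))^k)⁻¹ * (((2:ℝ)^d)^j * (((4:ℝ)^σ₂)^j)⁻¹)
        = ((4:ℝ)^s/(4:ℝ)^(s+σ₁))^k * ((2:ℝ)^d/(4:ℝ)^σ₂)^j := by
          rw [div_pow, div_pow]
          ring
      _ = q^k * (q⁻¹)^j := by rw [hx, hy]
      _ = q^(k-j) := by
          rw [inv_pow, ← Nat.sub_add_cancel hjk, pow_add]
          have hqj : (q:ℝ)^j ≠ 0 := pow_ne_zero j (ne_of_gt hqpos)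
          field_simp
          rw [Nat.add_sub_cancel]
  calc (((d:ℝ)+1)*(1+((2^(k+1):ℕ):ℝ)^2))^s * ((2^(j+1)+1:ℕ):ℝ)^d
        * (((4:ℝ)^j/4)^σ₂)⁻¹ * (((4:ℝ)^k/4)^(s+σ₁))⁻¹
      = (((d:ℝ)+1)*(1+((2^(k+1):ℕ):ℝ)^2))^s * ((2^(j+1)+1:ℕ):ℝ)^d
        * ((4:ℝ)^σ₂ * (((4:ℝ)^σ₂)^j)⁻¹) * ((4:ℝ)^(s+σ₁) * (((4:ℝ)^(s+σ₁))^k)⁻¹) := by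
        rw [t3, t4]
    _ ≤ ((8*((d:ℝ)+1))^s * ((4:ℝ)^s)^k) * ((4:ℝ)^d * ((2:ℝ)^d)^j)
        * ((4:ℝ)^σ₂ * (((4:ℝ)^σ₂)^j)⁻¹) * ((4:ℝ)^(s+σ₁) * (((4:ℝ)^(s+σ₁))^k)⁻¹) := by
        have hpos1 : (0:ℝ) ≤ (4:ℝ)^σ₂ * (((4:ℝ)^σ₂)^j)⁻¹ := by positivity
        have hpos2 : (0:ℝ) ≤ (4:ℝ)^(s+σ₁) * (((4:ℝ)^(s+σ₁))^k)⁻¹ := by positivity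
        gcongr
    _ = ((8*((d:ℝ)+1))^s * (4:ℝ)^d * (4:ℝ)^σ₂ * (4:ℝ)^(s+σ₁))
        * (((4:ℝ)^s)^k * (((4:ℝ)^(s+σ₁))^k)⁻¹ * (((2:ℝ)^d)^j * (((4:ℝ)^σ₂)^j)⁻¹)) := by
        ring
    _ = ((8*((d:ℝ)+1))^s * (4:ℝ)^d * (4:ℝ)^σ₂ * (4:ℝ)^(s+σ₁)) * q^(k-j) := by
        rw [key2]

/-- The per-block estimate. -/
lemma block_est (hd : 0 < d) {s σ₁ σ₂ : ℝ} (hs : 0 ≤ s) (hσ₁ : 0 < σ₁) (hσ₂ : 0 < σ₂)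
    (hsum : σ₁ + σ₂ = (d:ℝ)/2) (a b : (Fin d → ℤ) → ℝ≥0∞) {j k : ℕ} (hjk : j ≤ k) :
    GN d s (conv (blk a k) (blk b j))
      ≤ CCb d s σ₁ σ₂ * (rho σ₁) ^ (k-j) * (Qblk d (s+σ₁) a k) ^ (1/2:ℝ)
        * (Qblk d σ₂ b j) ^ (1/2:ℝ) := by
  set A := blk a k with hA
  set B := blk b j with hB
  set U : ℝ≥0∞ := ENNReal.ofReal ((((d:ℝ)+1)*(1+((2^(k+1):ℕ):ℝ)^2))^s) with hU
  set V₁ : ℝ≥0∞ := ENNReal.ofReal ((((4:ℝ)^k/4)^(s+σ₁))⁻¹) with hV₁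
  set V₂ : ℝ≥0∞ := ENNReal.ofReal ((((4:ℝ)^j/4)^σ₂)⁻¹) with hV₂
  set Nj : ℝ≥0∞ := ((2^(j+1)+1 : ℕ) : ℝ≥0∞) ^ d with hNj
  -- Step 1: weight bound on the support
  have hW : ∀ ξ, conv A B ξ ≠ 0 → W d s ξ ≤ U := by
    intro ξ hne
    have hex : ∃ η, A η * B (ξ - η) ≠ 0 := by
      by_contra hcon
      push_neg at hcon
      exact hne (by rw [conv]; rw [tsum_congr hcon]; exact tsum_zero)
    obtain ⟨η, hη⟩ := hex
    have hAη : A η ≠ 0 := fun h => hη (by rw [h, zero_mul])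
    have hBη : B (ξ - η) ≠ 0 := fun h => hη (by rw [h, mul_zero])
    have hKa : KK η = k := by
      by_contra h
      exact hAη (if_neg h)
    have hKb : KK (ξ - η) = j := by
      by_contra h
      exact hBη (if_neg h)
    have h1 : mm η < 2^k := by rw [← hKa]; exact mm_lt η
    have h2 : mm (ξ - η) < 2^j := by rw [← hKb]; exact mm_lt _
    have h2' : (2:ℕ)^j ≤ 2^k := Nat.pow_le_pow_right (by norm_num) hjk
    have h3 : mm ξ ≤ 2^(k+1) := by
      have hma := mm_add η (ξ - η)
      have he : η + (ξ - η) = ξ := by abel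
      rw [he] at hma
      have hp : (2:ℕ)^(k+1) = 2^k + 2^k := by ring
      omega
    exact ENNReal.ofReal_le_ofReal (sobWeight_le hs h3)
  have step1 : Q d s (conv A B) ≤ U * ∑' ξ, (conv A B ξ)^(2:ℕ) := by
    rw [Q, ← ENNReal.tsum_mul_left]
    refine ENNReal.tsum_le_tsum fun ξ => ?_
    by_cases h : conv A B ξ = 0
    · rw [h]
      simp
    · exact mul_le_mul_left (hW ξ h) _
  -- Step 2: ℓ² bound for the a-block
  have hA2 : ∑' η, A η ^ (2:ℕ) ≤ V₁ * Qblk d (s+σ₁) a k := by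
    have hpt : ∀ η, A η ^ (2:ℕ)
        ≤ V₁ * (if KK η = k then W d (s+σ₁) η * a η ^ 2 else 0) := by
      intro η
      by_cases h : KK η = k
      · have hτ : (0:ℝ) ≤ s + σ₁ := by linarith
        have hLpos : (0:ℝ) < ((4:ℝ)^k/4)^(s+σ₁) := Real.rpow_pos_of_pos (by positivity) _
        have hge := sobWeight_ge hd hτ η
        rw [h] at hge
        have hreal : (1:ℝ) ≤ (((4:ℝ)^k/4)^(s+σ₁))⁻¹ * sobWeight (s+σ₁) η := by
          rw [← inv_mul_cancel₀ (ne_of_gt hLpos)]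
          exact mul_le_mul_of_nonneg_left hge (by positivity)
        have h1 : (1:ℝ≥0∞) ≤ V₁ * W d (s+σ₁) η := by
          calc (1:ℝ≥0∞) = ENNReal.ofReal 1 := by simp
            _ ≤ ENNReal.ofReal ((((4:ℝ)^k/4)^(s+σ₁))⁻¹ * sobWeight (s+σ₁) η) :=
              ENNReal.ofReal_le_ofReal hreal
            _ = V₁ * W d (s+σ₁) η := ENNReal.ofReal_mul (by positivity)
        have hAeq : A η = a η := by simp only [hA, blk, if_pos h]
        rw [hAeq, if_pos h]
        calc a η ^ (2:ℕ) = 1 * a η ^ (2:ℕ) := (one_mul _).symm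
          _ ≤ (V₁ * W d (s+σ₁) η) * a η ^ (2:ℕ) := mul_le_mul_left h1 _
          _ = V₁ * (W d (s+σ₁) η * a η ^ (2:ℕ)) := by rw [mul_assoc]
      · have hA0 : A η = 0 := by simp only [hA, blk, if_neg h]
        rw [hA0]
        simpa using zero_le
    calc ∑' η, A η ^ (2:ℕ)
        ≤ ∑' η, V₁ * (if KK η = k then W d (s+σ₁) η * a η ^ 2 else 0) :=
          ENNReal.tsum_le_tsum hpt
      _ = V₁ * Qblk d (s+σ₁) a k := by rw [ENNReal.tsum_mul_left, Qblk]
  -- Step 3: ℓ¹ bound for the b-block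
  have hB1 : ∑' ζ, B ζ ≤ (V₂ * Nj) ^ (1/2:ℝ) * (Qblk d σ₂ b j) ^ (1/2:ℝ) := by
    set u : (Fin d → ℤ) → ℝ≥0∞ := fun ζ => if KK ζ = j then W d (-(σ₂/2)) ζ else 0 with hu
    set v : (Fin d → ℤ) → ℝ≥0∞ := fun ζ => if KK ζ = j then W d (σ₂/2) ζ * b ζ else 0 with hv
    have huv : ∀ ζ, B ζ = u ζ * v ζ := by
      intro ζ
      by_cases h : KK ζ = j
      · simp only [hB, blk, hu, hv, if_pos h]
        rw [← mul_assoc, W_neg_mul, one_mul]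
      · simp [hB, blk, hu, hv, h]
    have hu2 : ∑' ζ, u ζ ^ (2:ℕ) ≤ V₂ * Nj := by
      have hpt : ∀ ζ, u ζ ^ (2:ℕ) ≤ V₂ * (if KK ζ = j then (1:ℝ≥0∞) else 0) := by
        intro ζ
        by_cases h : KK ζ = j
        · simp only [hu, if_pos h]
          rw [pow_two, W_add]
          have hexp : -(σ₂/2) + -(σ₂/2) = -σ₂ := by ring
          rw [hexp, mul_one]
          have hLpos : (0:ℝ) < ((4:ℝ)^j/4)^σ₂ := Real.rpow_pos_of_pos (by positivity) _
          have hge := sobWeight_ge hd (le_of_lt hσ₂) ζ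
          rw [h] at hge
          have hreal : sobWeight (-σ₂) ζ ≤ (((4:ℝ)^j/4)^σ₂)⁻¹ := by
            rw [sobWeight, Real.rpow_neg (le_of_lt (base_pos ζ))]
            exact inv_anti₀ hLpos hge
          exact ENNReal.ofReal_le_ofReal hreal
        · simp [hu, h]
      calc ∑' ζ, u ζ ^ (2:ℕ)
          ≤ ∑' ζ, V₂ * (if KK ζ = j then (1:ℝ≥0∞) else 0) := ENNReal.tsum_le_tsum hpt
        _ = V₂ * ∑' ζ, (if KK ζ = j then (1:ℝ≥0∞) else 0) := ENNReal.tsum_mul_left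
        _ ≤ V₂ * Nj := mul_le_mul_right (count_blk j) _
    have hv2 : ∑' ζ, v ζ ^ (2:ℕ) = Qblk d σ₂ b j := by
      rw [Qblk]
      apply tsum_congr
      intro ζ
      by_cases h : KK ζ = j
      · simp only [hv, if_pos h]
        rw [mul_pow, pow_two (W d (σ₂/2) ζ), W_add]
        have hexp : σ₂/2 + σ₂/2 = σ₂ := by ring
        rw [hexp]
      · simp [hv, h]
    calc ∑' ζ, B ζ = ∑' ζ, u ζ * v ζ := tsum_congr huv
      _ ≤ (∑' ζ, u ζ ^ (2:ℕ)) ^ (1/2:ℝ) * (∑' ζ, v ζ ^ (2:ℕ)) ^ (1/2:ℝ) := tsum_CS u v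
      _ ≤ (V₂ * Nj) ^ (1/2:ℝ) * (Qblk d σ₂ b j) ^ (1/2:ℝ) := by
          rw [hv2]
          exact mul_le_mul_left (ENNReal.rpow_le_rpow hu2 (by norm_num)) _
  -- combine
  have hcomb : Q d s (conv A B)
      ≤ (U * (V₂ * Nj) * V₁) * (Qblk d σ₂ b j * Qblk d (s+σ₁) a k) := by
    calc Q d s (conv A B) ≤ U * ∑' ξ, (conv A B ξ)^(2:ℕ) := step1
      _ ≤ U * ((∑' ζ, B ζ) ^ (2:ℕ) * ∑' η, A η ^ (2:ℕ)) := mul_le_mul_right (young A B) _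
      _ ≤ U * (((V₂ * Nj) ^ (1/2:ℝ) * (Qblk d σ₂ b j) ^ (1/2:ℝ)) ^ (2:ℕ)
            * (V₁ * Qblk d (s+σ₁) a k)) := by
          exact mul_le_mul_right (mul_le_mul' (pow_le_pow_left' hB1 2) hA2) _
      _ = (U * (V₂ * Nj) * V₁) * (Qblk d σ₂ b j * Qblk d (s+σ₁) a k) := by
          rw [mul_pow, sq_half, sq_half]
          ring
  -- constant arithmetic
  have hconst : U * (V₂ * Nj) * V₁
      ≤ ENNReal.ofReal (((8*((d:ℝ)+1))^s * (4:ℝ)^d * (4:ℝ)^σ₂ * (4:ℝ)^(s+σ₁))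
          * ((4:ℝ)^(-σ₁)) ^ (k-j)) := by
    have hNjr : Nj = ENNReal.ofReal (((2^(j+1)+1:ℕ):ℝ)^d) := by
      rw [hNj, ENNReal.ofReal_pow (by positivity), ENNReal.ofReal_natCast]
    rw [hU, hV₁, hV₂, hNjr, ← ENNReal.ofReal_mul (by positivity),
      ← ENNReal.ofReal_mul (by positivity), ← ENNReal.ofReal_mul (by positivity)]
    apply ENNReal.ofReal_le_ofReal
    calc (((d:ℝ)+1)*(1+((2^(k+1):ℕ):ℝ)^2))^s * ((((4:ℝ)^j/4)^σ₂)⁻¹ * ((2^(j+1)+1:ℕ):ℝ)^d)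
          * (((4:ℝ)^k/4)^(s+σ₁))⁻¹
        = (((d:ℝ)+1)*(1+((2^(k+1):ℕ):ℝ)^2))^s * ((2^(j+1)+1:ℕ):ℝ)^d
          * (((4:ℝ)^j/4)^σ₂)⁻¹ * (((4:ℝ)^k/4)^(s+σ₁))⁻¹ := by ring
      _ ≤ _ := real_key hs hσ₁ hσ₂ hsum hjk
  -- final
  have hfin : GN d s (conv A B)
      ≤ (ENNReal.ofReal (((8*((d:ℝ)+1))^s * (4:ℝ)^d * (4:ℝ)^σ₂ * (4:ℝ)^(s+σ₁))
          * ((4:ℝ)^(-σ₁)) ^ (k-j))) ^ (1/2:ℝ)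
        * (Qblk d (s+σ₁) a k) ^ (1/2:ℝ) * (Qblk d σ₂ b j) ^ (1/2:ℝ) := by
    rw [GN]
    calc (Q d s (conv A B)) ^ (1/2:ℝ)
        ≤ ((ENNReal.ofReal (((8*((d:ℝ)+1))^s * (4:ℝ)^d * (4:ℝ)^σ₂ * (4:ℝ)^(s+σ₁))
            * ((4:ℝ)^(-σ₁)) ^ (k-j)))
          * (Qblk d σ₂ b j * Qblk d (s+σ₁) a k)) ^ (1/2:ℝ) := by
          apply ENNReal.rpow_le_rpow _ (by norm_num)
          exact le_trans hcomb (mul_le_mul_left hconst _)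
      _ = _ := by
          rw [ENNReal.mul_rpow_of_nonneg _ _ (by norm_num : (0:ℝ) ≤ 1/2),
            ENNReal.mul_rpow_of_nonneg _ _ (by norm_num : (0:ℝ) ≤ 1/2)]
          ring
  calc GN d s (conv A B) ≤ _ := hfin
    _ = CCb d s σ₁ σ₂ * (rho σ₁) ^ (k-j) * (Qblk d (s+σ₁) a k) ^ (1/2:ℝ)
        * (Qblk d σ₂ b j) ^ (1/2:ℝ) := by
        rw [ENNReal.ofReal_mul (by positivity), ENNReal.ofReal_pow (by positivity),
          ENNReal.mul_rpow_of_nonneg _ _ (by norm_num : (0:ℝ) ≤ 1/2),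
          enn_npow_rpow, CCb, rho]

end Stmt4

namespace Stmt4

variable {d : ℕ}

lemma mul_le_sq_add (x y : ℝ≥0∞) : x * y ≤ x^(2:ℕ) + y^(2:ℕ) := by
  rcases le_total x y with h | h
  · calc x * y ≤ y * y := mul_le_mul_left h y
      _ = y^(2:ℕ) := (pow_two y).symm
      _ ≤ _ := le_add_self
  · calc x * y ≤ x * x := mul_le_mul_right h x
      _ = x^(2:ℕ) := (pow_two x).symm
      _ ≤ _ := le_self_add

lemma row_sum {ρ : ℝ≥0∞} (k : ℕ) :
    ∑' j : ℕ, (if j ≤ k then ρ^(k-j) else 0) ≤ (1 - ρ)⁻¹ := by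
  have h1 : ∑' j : ℕ, (if j ≤ k then ρ^(k-j) else 0)
      = ∑ j ∈ Finset.range (k+1), (if j ≤ k then ρ^(k-j) else 0) := by
    apply tsum_eq_sum
    intro j hj
    rw [if_neg]
    intro hle
    exact hj (Finset.mem_range.mpr (Nat.lt_succ_of_le hle))
  have h2 : ∑ j ∈ Finset.range (k+1), (if j ≤ k then ρ^(k-j) else 0)
      = ∑ j ∈ Finset.range (k+1), ρ^(k-j) := by
    apply Finset.sum_congr rfl
    intro j hj
    rw [if_pos (Nat.lt_succ_iff.mp (Finset.mem_range.mp hj))]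
  have h3 : ∑ j ∈ Finset.range (k+1), ρ^(k-j) = ∑ j ∈ Finset.range (k+1), ρ^j := by
    have := Finset.sum_range_reflect (fun l => ρ^l) (k+1)
    simpa using this
  rw [h1, h2, h3]
  calc ∑ j ∈ Finset.range (k+1), ρ^j ≤ ∑' j : ℕ, ρ^j := ENNReal.sum_le_tsum _
    _ = (1 - ρ)⁻¹ := ENNReal.tsum_geometric ρ

lemma col_sum {ρ : ℝ≥0∞} (j : ℕ) :
    ∑' k : ℕ, (if j ≤ k then ρ^(k-j) else 0) ≤ (1 - ρ)⁻¹ := by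
  have hinj : Function.Injective (fun l : ℕ => j + l) := fun x y h => by
    simpa using h
  have hsupp : Function.support (fun k => if j ≤ k then ρ^(k-j) else 0)
      ⊆ Set.range (fun l : ℕ => j + l) := by
    intro k hk
    by_cases h : j ≤ k
    · exact ⟨k - j, by simp; omega⟩
    · exact absurd (if_neg h) hk
  have := Function.Injective.tsum_eq hinj hsupp
  rw [← this]
  have heq : ∀ l : ℕ, (if j ≤ j + l then ρ^((j+l)-j) else 0) = ρ^l := by
    intro l
    rw [if_pos (by omega)]
    congr 1
    omega
  calc ∑' l : ℕ, (if j ≤ j + l then ρ^((j+l)-j) else 0) = ∑' l : ℕ, ρ^l :=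
        tsum_congr heq
    _ = (1 - ρ)⁻¹ := ENNReal.tsum_geometric ρ
    _ ≤ (1 - ρ)⁻¹ := le_refl _

/-- main additive-form estimate -/
lemma main_add (hd : 0 < d) {s σ₁ σ₂ : ℝ} (hs : 0 ≤ s) (hσ₁ : 0 < σ₁) (hσ₂ : 0 < σ₂)
    (hsum : σ₁ + σ₂ = (d:ℝ)/2) (a b : (Fin d → ℤ) → ℝ≥0∞) :
    GN d s (conv₁ a b) ≤ (CCb d s σ₁ σ₂ * (1 - rho σ₁)⁻¹)
      * (Q d (s+σ₁) a + Q d σ₂ b) := by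
  set ρ := rho σ₁ with hρ
  set CC := CCb d s σ₁ σ₂ with hCC
  set G := (1 - ρ)⁻¹ with hG
  set αh : ℕ → ℝ≥0∞ := fun k => (Qblk d (s+σ₁) a k) ^ (1/2:ℝ) with hαh
  set βh : ℕ → ℝ≥0∞ := fun j => (Qblk d σ₂ b j) ^ (1/2:ℝ) with hβh
  have step1 : GN d s (conv₁ a b)
      ≤ ∑' p : ℕ × ℕ, (if p.2 ≤ p.1 then CC * ρ^(p.1-p.2) * αh p.1 * βh p.2 else 0) := by
    calc GN d s (conv₁ a b)
        ≤ GN d s (fun ξ => ∑' p : ℕ × ℕ,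
            (if p.2 ≤ p.1 then conv (blk a p.1) (blk b p.2) ξ else 0)) :=
          GN_mono s (conv₁_le_blocks a b)
      _ ≤ ∑' p : ℕ × ℕ, GN d s
            (fun ξ => if p.2 ≤ p.1 then conv (blk a p.1) (blk b p.2) ξ else 0) :=
          GN_tsum_le s _
      _ ≤ ∑' p : ℕ × ℕ, (if p.2 ≤ p.1 then CC * ρ^(p.1-p.2) * αh p.1 * βh p.2 else 0) := by
          refine ENNReal.tsum_le_tsum fun p => ?_
          by_cases h : p.2 ≤ p.1
          · simp only [if_pos h]
            exact block_est hd hs hσ₁ hσ₂ hsum a b h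
          · simp only [if_neg h]
            rw [show (fun _ : Fin d → ℤ => (0:ℝ≥0∞)) = fun _ => 0 from rfl, GN_zero]
  have step2 : ∑' p : ℕ × ℕ, (if p.2 ≤ p.1 then CC * ρ^(p.1-p.2) * αh p.1 * βh p.2 else 0)
      ≤ CC * ∑' p : ℕ × ℕ,
        ((if p.2 ≤ p.1 then ρ^(p.1-p.2) else 0) * αh p.1 ^ (2:ℕ)
          + (if p.2 ≤ p.1 then ρ^(p.1-p.2) else 0) * βh p.2 ^ (2:ℕ)) := by
    rw [← ENNReal.tsum_mul_left]
    refine ENNReal.tsum_le_tsum fun p => ?_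
    by_cases h : p.2 ≤ p.1
    · simp only [if_pos h]
      calc CC * ρ^(p.1-p.2) * αh p.1 * βh p.2
          = CC * (ρ^(p.1-p.2) * (αh p.1 * βh p.2)) := by ring
        _ ≤ CC * (ρ^(p.1-p.2) * (αh p.1 ^ (2:ℕ) + βh p.2 ^ (2:ℕ))) := by
            exact mul_le_mul_right (mul_le_mul_right (mul_le_sq_add _ _) _) _
        _ = CC * (ρ^(p.1-p.2) * αh p.1 ^ (2:ℕ) + ρ^(p.1-p.2) * βh p.2 ^ (2:ℕ)) := by
            rw [mul_add]
    · simp [if_neg h]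
  have hαsq : ∀ k, αh k ^ (2:ℕ) = Qblk d (s+σ₁) a k := fun k => sq_half _
  have hβsq : ∀ j, βh j ^ (2:ℕ) = Qblk d σ₂ b j := fun j => sq_half _
  have step3 : ∑' p : ℕ × ℕ,
      ((if p.2 ≤ p.1 then ρ^(p.1-p.2) else 0) * αh p.1 ^ (2:ℕ)
        + (if p.2 ≤ p.1 then ρ^(p.1-p.2) else 0) * βh p.2 ^ (2:ℕ))
      ≤ G * (Q d (s+σ₁) a + Q d σ₂ b) := by
    rw [ENNReal.tsum_add]
    have hS1 : ∑' p : ℕ × ℕ, (if p.2 ≤ p.1 then ρ^(p.1-p.2) else 0) * αh p.1 ^ (2:ℕ)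
        ≤ G * Q d (s+σ₁) a := by
      rw [ENNReal.tsum_prod']
      calc ∑' k, ∑' j, (if j ≤ k then ρ^(k-j) else 0) * αh k ^ (2:ℕ)
          = ∑' k, (∑' j : ℕ, (if j ≤ k then ρ^(k-j) else 0)) * αh k ^ (2:ℕ) :=
            tsum_congr fun k => ENNReal.tsum_mul_right
        _ ≤ ∑' k, G * αh k ^ (2:ℕ) :=
            ENNReal.tsum_le_tsum fun k => mul_le_mul_left (row_sum k) _
        _ = G * ∑' k, Qblk d (s+σ₁) a k := by
            rw [ENNReal.tsum_mul_left]
            congr 1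
            exact tsum_congr fun k => hαsq k
        _ = G * Q d (s+σ₁) a := by rw [Qblk_sum]
    have hS2 : ∑' p : ℕ × ℕ, (if p.2 ≤ p.1 then ρ^(p.1-p.2) else 0) * βh p.2 ^ (2:ℕ)
        ≤ G * Q d σ₂ b := by
      rw [ENNReal.tsum_prod']
      rw [ENNReal.tsum_comm]
      calc ∑' j, ∑' k, (if j ≤ k then ρ^(k-j) else 0) * βh j ^ (2:ℕ)
          = ∑' j, (∑' k : ℕ, (if j ≤ k then ρ^(k-j) else 0)) * βh j ^ (2:ℕ) :=
            tsum_congr fun j => ENNReal.tsum_mul_right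
        _ ≤ ∑' j, G * βh j ^ (2:ℕ) :=
            ENNReal.tsum_le_tsum fun j => mul_le_mul_left (col_sum j) _
        _ = G * ∑' j, Qblk d σ₂ b j := by
            rw [ENNReal.tsum_mul_left]
            congr 1
            exact tsum_congr fun j => hβsq j
        _ = G * Q d σ₂ b := by rw [Qblk_sum]
    calc _ ≤ G * Q d (s+σ₁) a + G * Q d σ₂ b := add_le_add hS1 hS2
      _ = G * (Q d (s+σ₁) a + Q d σ₂ b) := (mul_add _ _ _).symm
  calc GN d s (conv₁ a b) ≤ _ := step1
    _ ≤ _ := step2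
    _ ≤ CC * (G * (Q d (s+σ₁) a + Q d σ₂ b)) := mul_le_mul_right step3 _
    _ = (CC * G) * (Q d (s+σ₁) a + Q d σ₂ b) := by rw [mul_assoc]

end Stmt4

namespace Stmt4

variable {d : ℕ}

lemma Q_scale (σ : ℝ) (t : ℝ≥0∞) (a : (Fin d → ℤ) → ℝ≥0∞) :
    Q d σ (fun ξ => t * a ξ) = t^(2:ℕ) * Q d σ a := by
  rw [Q, Q, ← ENNReal.tsum_mul_left]
  apply tsum_congr
  intro ξ
  rw [mul_pow]
  ring

lemma GN_eq_zero_imp (σ : ℝ) (a : (Fin d → ℤ) → ℝ≥0∞) (h : GN d σ a = 0) :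
    ∀ ξ, a ξ = 0 := by
  intro ξ
  have hQ : Q d σ a = 0 := by
    rcases ENNReal.rpow_eq_zero_iff.mp h with ⟨h1, _⟩ | ⟨_, h2⟩
    · exact h1
    · norm_num at h2
  have := ENNReal.tsum_eq_zero.mp hQ ξ
  rcases mul_eq_zero.mp this with h1 | h2
  · exact absurd h1 (W_ne_zero σ ξ)
  · exact pow_eq_zero_iff (by norm_num) |>.mp h2

/-- main product-form estimate -/
lemma main_mul (hd : 0 < d) {s σ₁ σ₂ : ℝ} (hs : 0 ≤ s) (hσ₁ : 0 < σ₁) (hσ₂ : 0 < σ₂)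
    (hsum : σ₁ + σ₂ = (d:ℝ)/2) :
    ∃ C : ℝ≥0∞, C ≠ ⊤ ∧ ∀ a b : (Fin d → ℤ) → ℝ≥0∞,
      GN d (s+σ₁) a ≠ ⊤ → GN d σ₂ b ≠ ⊤ →
      GN d s (conv₁ a b) ≤ C * (GN d (s+σ₁) a * GN d σ₂ b) := by
  set C₀ := CCb d s σ₁ σ₂ * (1 - rho σ₁)⁻¹ with hC₀
  have hC₀top : C₀ ≠ ⊤ := by
    apply ENNReal.mul_ne_top (CCb_ne_top s σ₁ σ₂)
    rw [ENNReal.inv_ne_top]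
    simp [tsub_eq_zero_iff_le, not_le]
    exact rho_lt_one hσ₁
  refine ⟨2 * C₀, ENNReal.mul_ne_top (by norm_num) hC₀top, ?_⟩
  intro a b hA hB
  by_cases hA0 : GN d (s+σ₁) a = 0
  · have ha : ∀ ξ, a ξ = 0 := GN_eq_zero_imp _ a hA0
    have hconv : ∀ ξ, conv₁ a b ξ = 0 := by
      intro ξ
      rw [conv₁, ENNReal.tsum_eq_zero]
      intro η
      rw [ha η]
      simp
    have : GN d s (conv₁ a b) = 0 := by
      have : conv₁ a b = fun _ => 0 := funext hconv
      rw [this, GN_zero]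
    rw [this]
    exact zero_le
  by_cases hB0 : GN d σ₂ b = 0
  · have hb : ∀ ξ, b ξ = 0 := GN_eq_zero_imp _ b hB0
    have hconv : ∀ ξ, conv₁ a b ξ = 0 := by
      intro ξ
      rw [conv₁, ENNReal.tsum_eq_zero]
      intro η
      rw [hb (ξ - η)]
      simp
    have : GN d s (conv₁ a b) = 0 := by
      have : conv₁ a b = fun _ => 0 := funext hconv
      rw [this, GN_zero]
    rw [this]
    exact zero_le
  -- scaling
  set A := GN d (s+σ₁) a with hAdef
  set B := GN d σ₂ b with hBdef
  set c : ℝ≥0∞ := (B * A⁻¹) ^ (1/2:ℝ) with hc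
  set c' : ℝ≥0∞ := (A * B⁻¹) ^ (1/2:ℝ) with hc'
  have hcc' : c * c' = 1 := by
    rw [hc, hc', ← ENNReal.mul_rpow_of_nonneg _ _ (by norm_num : (0:ℝ) ≤ 1/2)]
    have : B * A⁻¹ * (A * B⁻¹) = 1 := by
      calc B * A⁻¹ * (A * B⁻¹) = (A⁻¹ * A) * (B * B⁻¹) := by ring
        _ = 1 * 1 := by rw [ENNReal.inv_mul_cancel hA0 hA, ENNReal.mul_inv_cancel hB0 hB]
        _ = 1 := one_mul 1
    rw [this, ENNReal.one_rpow]
  have hconv_eq : conv₁ (fun ξ => c * a ξ) (fun ξ => c' * b ξ) = conv₁ a b := by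
    funext ξ
    rw [conv₁, conv₁]
    apply tsum_congr
    intro η
    by_cases h : KK (ξ - η) ≤ KK η
    · rw [if_pos h, if_pos h, mul_mul_mul_comm, hcc', one_mul]
    · rw [if_neg h, if_neg h]
  have hQa : Q d (s+σ₁) (fun ξ => c * a ξ) = B * A := by
    rw [Q_scale]
    have hc2 : c ^ (2:ℕ) = B * A⁻¹ := sq_half _
    rw [hc2, ← GN_sq (s+σ₁) a, ← hAdef]
    calc B * A⁻¹ * A ^ (2:ℕ) = B * (A⁻¹ * A) * A := by ring
      _ = B * 1 * A := by rw [ENNReal.inv_mul_cancel hA0 hA]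
      _ = B * A := by ring
  have hQb : Q d σ₂ (fun ξ => c' * b ξ) = A * B := by
    rw [Q_scale]
    have hc2 : c' ^ (2:ℕ) = A * B⁻¹ := sq_half _
    rw [hc2, ← GN_sq σ₂ b, ← hBdef]
    calc A * B⁻¹ * B ^ (2:ℕ) = A * (B⁻¹ * B) * B := by ring
      _ = A * 1 * B := by rw [ENNReal.inv_mul_cancel hB0 hB]
      _ = A * B := by ring
  have := main_add hd hs hσ₁ hσ₂ hsum (fun ξ => c * a ξ) (fun ξ => c' * b ξ)
  rw [hconv_eq, hQa, hQb] at this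
  calc GN d s (conv₁ a b) ≤ C₀ * (B * A + A * B) := this
    _ = 2 * C₀ * (A * B) := by ring

end Stmt4

namespace Stmt4

variable {d : ℕ}

lemma enorm_pairProd_le (f g : (Fin d → ℤ) → ℂ) (ξ : Fin d → ℤ) :
    (‖pairProd d f g ξ‖₊ : ℝ≥0∞) ≤ ∑' η, (‖f η‖₊ : ℝ≥0∞) * (‖g (ξ - η)‖₊ : ℝ≥0∞) := by
  by_cases hsum : Summable (fun η => f η * g (ξ - η))
  · have hns : Summable (fun η => ‖f η * g (ξ - η)‖) := hsum.norm
    have h1 : ‖pairProd d f g ξ‖ ≤ ∑' η, ‖f η * g (ξ - η)‖ := norm_tsum_le_tsum_norm hns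
    calc (‖pairProd d f g ξ‖₊ : ℝ≥0∞) = ENNReal.ofReal ‖pairProd d f g ξ‖ :=
          (ofReal_norm _).symm
      _ ≤ ENNReal.ofReal (∑' η, ‖f η * g (ξ - η)‖) := ENNReal.ofReal_le_ofReal h1
      _ = ∑' η, ENNReal.ofReal ‖f η * g (ξ - η)‖ :=
          ENNReal.ofReal_tsum_of_nonneg (fun _ => norm_nonneg _) hns
      _ = ∑' η, (‖f η‖₊ : ℝ≥0∞) * (‖g (ξ - η)‖₊ : ℝ≥0∞) := by
          apply tsum_congr
          intro η
          rw [norm_mul, ENNReal.ofReal_mul (norm_nonneg _), ofReal_norm, enorm_eq_nnnorm,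
            ofReal_norm, enorm_eq_nnnorm]
  · have h0 : pairProd d f g ξ = 0 := tsum_eq_zero_of_not_summable hsum
    rw [h0]
    simp

lemma split_le (a b : (Fin d → ℤ) → ℝ≥0∞) (ξ : Fin d → ℤ) :
    (∑' η, a η * b (ξ - η)) ≤ conv₁ a b ξ + conv₁ b a ξ := by
  have heq : (∑' η, a η * b (ξ - η))
      = conv₁ a b ξ + ∑' η, (if ¬ KK (ξ-η) ≤ KK η then a η * b (ξ-η) else 0) := by
    rw [conv₁, ← ENNReal.tsum_add]
    apply tsum_congr
    intro η
    by_cases h : KK (ξ-η) ≤ KK η <;> simp [h]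
  rw [heq]
  apply add_le_add_right
  have he := (Equiv.subLeft ξ).tsum_eq
    (f := fun η => if ¬ KK (ξ-η) ≤ KK η then a η * b (ξ-η) else 0)
  rw [← he, conv₁]
  refine ENNReal.tsum_le_tsum fun ζ => ?_
  simp only [Equiv.subLeft_apply, sub_sub_cancel]
  by_cases h : KK ζ ≤ KK (ξ - ζ)
  · rw [if_neg (by simpa using h)]
    exact zero_le
  · rw [if_pos (by simpa using h), if_pos (le_of_not_ge h)]
    exact le_of_eq (mul_comm _ _)

end Stmt4


/-- Bilinear product estimate at critical total regularity `d/2`: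
for `s ≥ 0`, `s₁, s₂, s̃₁, s̃₂ > 0` with `s₁ + s₂ = d/2 = s̃₁ + s̃₂`,
`‖fg‖_{Hˢ} ≲ ‖f‖_{H^{s+s₁}} ‖g‖_{H^{s₂}} + ‖f‖_{H^{s̃₁}} ‖g‖_{H^{s+s̃₂}}`,
with constant depending only on `d, s, s₁, s₂, s̃₁, s̃₂`. -/
theorem stmt_4 (d : ℕ) (hd : 0 < d) (s s₁ s₂ t₁ t₂ : ℝ)
    (hs : 0 ≤ s) (hs₁ : 0 < s₁) (hs₂ : 0 < s₂) (ht₁ : 0 < t₁) (ht₂ : 0 < t₂)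
    (hsum : s₁ + s₂ = (d : ℝ)/2) (htsum : t₁ + t₂ = (d : ℝ)/2) :
    ∃ C : ℝ, 0 < C ∧ ∀ f g : (Fin d → ℤ) → ℂ,
      sobNorm d (s + s₁) f ≠ ⊤ → sobNorm d s₂ g ≠ ⊤ →
      sobNorm d t₁ f ≠ ⊤ → sobNorm d (s + t₂) g ≠ ⊤ →
      sobNorm d s (pairProd d f g) ≤
        ENNReal.ofReal C * (sobNorm d (s + s₁) f * sobNorm d s₂ g +
          sobNorm d t₁ f * sobNorm d (s + t₂) g) := by
  have htsum' : t₂ + t₁ = (d:ℝ)/2 := by linarith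
  obtain ⟨C₁, hC₁top, hbound₁⟩ := Stmt4.main_mul hd hs hs₁ hs₂ hsum
  obtain ⟨C₂, hC₂top, hbound₂⟩ := Stmt4.main_mul hd hs ht₂ ht₁ htsum'
  set K := C₁ + C₂ with hK
  have hKtop : K ≠ ⊤ := ENNReal.add_ne_top.mpr ⟨hC₁top, hC₂top⟩
  have hKle : K ≤ ENNReal.ofReal (K.toReal + 1) := by
    conv_lhs => rw [← ENNReal.ofReal_toReal hKtop]
    exact ENNReal.ofReal_le_ofReal (by linarith)
  refine ⟨K.toReal + 1, by positivity, ?_⟩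
  intro f g hf1 hg1 hf2 hg2
  rw [Stmt4.sobNorm_eq] at hf1 hg1 hf2 hg2
  rw [Stmt4.sobNorm_eq, Stmt4.sobNorm_eq, Stmt4.sobNorm_eq, Stmt4.sobNorm_eq,
    Stmt4.sobNorm_eq]
  set a : (Fin d → ℤ) → ℝ≥0∞ := fun ξ => (‖f ξ‖₊ : ℝ≥0∞) with ha
  set b : (Fin d → ℤ) → ℝ≥0∞ := fun ξ => (‖g ξ‖₊ : ℝ≥0∞) with hb
  have hsplit : ∀ ξ, (‖pairProd d f g ξ‖₊ : ℝ≥0∞)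
      ≤ Stmt4.conv₁ a b ξ + Stmt4.conv₁ b a ξ := fun ξ =>
    le_trans (Stmt4.enorm_pairProd_le f g ξ) (Stmt4.split_le a b ξ)
  calc Stmt4.GN d s (fun ξ => (‖pairProd d f g ξ‖₊ : ℝ≥0∞))
      ≤ Stmt4.GN d s (fun ξ => Stmt4.conv₁ a b ξ + Stmt4.conv₁ b a ξ) :=
        Stmt4.GN_mono s hsplit
    _ ≤ Stmt4.GN d s (Stmt4.conv₁ a b) + Stmt4.GN d s (Stmt4.conv₁ b a) :=
        Stmt4.GN_add s _ _
    _ ≤ C₁ * (Stmt4.GN d (s+s₁) a * Stmt4.GN d s₂ b)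
        + C₂ * (Stmt4.GN d (s+t₂) b * Stmt4.GN d t₁ a) :=
        add_le_add (hbound₁ a b hf1 hg1) (hbound₂ b a hg2 hf2)
    _ ≤ K * (Stmt4.GN d (s+s₁) a * Stmt4.GN d s₂ b)
        + K * (Stmt4.GN d t₁ a * Stmt4.GN d (s+t₂) b) := by
        apply add_le_add
        · exact mul_le_mul_left le_self_add _
        · rw [mul_comm (Stmt4.GN d (s+t₂) b)]
          exact mul_le_mul_left le_add_self _
    _ = K * (Stmt4.GN d (s+s₁) a * Stmt4.GN d s₂ b
        + Stmt4.GN d t₁ a * Stmt4.GN d (s+t₂) b) := (mul_add _ _ _).symm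
    _ ≤ ENNReal.ofReal (K.toReal + 1) * (Stmt4.GN d (s+s₁) a * Stmt4.GN d s₂ b
        + Stmt4.GN d t₁ a * Stmt4.GN d (s+t₂) b) := mul_le_mul_left hKle _
end

section
/- Within each equivalence class of KM-relatable collapsing maps, there is exactly one collapsing map in upper echelon form. Consequently the number of upper echelon classes on $\{2,4,\ldots,2k\}$ is at most $8^k$. -/
/-- A collapsing map: `μ(2) = 1` and `1 ≤ μ(2j) < 2j` for all `1 ≤ j ≤ k`. -/
def IsCollapsing (k : ℕ) (μ : ℕ → ℕ) : Prop :=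
  μ 2 = 1 ∧ ∀ j, 1 ≤ j → j ≤ k → 1 ≤ μ (2*j) ∧ μ (2*j) < 2*j

/-- The permutation `ρ = (2j, 2j+2) ∘ (2j+1, 2j+3)` underlying a KM acceptable move. -/
def kmPerm (j : ℕ) : Equiv.Perm ℕ :=
  (Equiv.swap (2*j) (2*j + 2)).trans (Equiv.swap (2*j + 1) (2*j + 3))

/-- The move `KM(ρ)` with `ρ = (2j,2j+2)∘(2j+1,2j+3)` is acceptable for `μ`. -/
def Acceptable (k : ℕ) (μ : ℕ → ℕ) (j : ℕ) : Prop :=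
  2 ≤ j ∧ j ≤ k - 1 ∧ μ (2*j) ≠ μ (2*j + 2) ∧ μ (2*j + 2) < 2*j

/-- `μ'` is obtained from `μ` by one acceptable move: `μ' = ρ ∘ μ ∘ ρ⁻¹`. -/
def OneMove (k : ℕ) (μ μ' : ℕ → ℕ) : Prop :=
  ∃ j, Acceptable k μ j ∧
    ∀ l, 1 ≤ l → l ≤ k → μ' (2*l) = kmPerm j (μ (kmPerm j (2*l)))

/-- KM-relatability: the reflexive-transitive closure of acceptable moves. -/
def KMRel (k : ℕ) (μ μ' : ℕ → ℕ) : Prop :=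
  Relation.ReflTransGen (OneMove k) μ μ'

/-- Upper echelon form: `μ(2j) ≤ μ(2j+2)` for all `1 ≤ j ≤ k-1`. -/
def UpperEchelon (k : ℕ) (μ : ℕ → ℕ) : Prop :=
  ∀ j, 1 ≤ j → j ≤ k - 1 → μ (2*j) ≤ μ (2*j + 2)

/-- The set of (normalized) collapsing maps in upper echelon form. -/
def EchelonSet (k : ℕ) : Set (ℕ → ℕ) :=
  {μ | IsCollapsing k μ ∧ UpperEchelon k μ ∧
    ∀ n, ¬ (∃ l, 1 ≤ l ∧ l ≤ k ∧ n = 2*l) → μ n = 0}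

def fPerm (π : Equiv.Perm ℕ) (n : ℕ) : ℕ := 2 * π (n / 2) + n % 2

lemma fPerm_one (n : ℕ) : fPerm 1 n = n := by
  simp only [fPerm, Equiv.Perm.one_apply]; omega

lemma fPerm_mul (σ π : Equiv.Perm ℕ) (n : ℕ) : fPerm σ (fPerm π n) = fPerm (σ * π) n := by
  unfold fPerm
  have h1 : (2 * π (n / 2) + n % 2) / 2 = π (n / 2) := by omega
  have h2 : (2 * π (n / 2) + n % 2) % 2 = n % 2 := by omega
  rw [h1, h2, Equiv.Perm.mul_apply]

lemma fPerm_inj (π : Equiv.Perm ℕ) : Function.Injective (fPerm π) := by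
  intro x y h
  have := congrArg (fPerm π⁻¹) h
  rwa [fPerm_mul, fPerm_mul, inv_mul_cancel, fPerm_one, fPerm_one] at this

lemma fPerm_fix {π : Equiv.Perm ℕ} {n : ℕ} (h : π (n/2) = n/2) : fPerm π n = n := by
  unfold fPerm; rw [h]; omega

lemma kmPerm_eq (j x : ℕ) : kmPerm j x = fPerm (Equiv.swap j (j+1)) x := by
  unfold kmPerm fPerm
  simp only [Equiv.trans_apply, Equiv.swap_apply_def]
  split_ifs <;> omega

lemma kmPerm_two_mul (j l : ℕ) : kmPerm j (2*l) = 2 * (Equiv.swap j (j+1) l) := by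
  rw [kmPerm_eq]
  unfold fPerm
  have h : 2*l/2 = l := by omega
  rw [h]; omega

lemma swap_lt {j x y : ℕ} (hxy : x < y) (hne : ¬(x = j ∧ y = j+1)) :
    Equiv.swap j (j+1) x < Equiv.swap j (j+1) y := by
  simp only [Equiv.swap_apply_def]
  split_ifs <;> omega

/-- A convenient restatement of the OneMove equations via `fPerm`. -/
lemma oneMove_eq {k : ℕ} {μ μ' : ℕ → ℕ} {j : ℕ}
    (hf : ∀ l, 1 ≤ l → l ≤ k → μ' (2*l) = kmPerm j (μ (kmPerm j (2*l))))
    {l : ℕ} (h1 : 1 ≤ l) (h2 : l ≤ k) :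
    μ' (2*l) = fPerm (Equiv.swap j (j+1)) (μ (2 * (Equiv.swap j (j+1) l))) := by
  rw [hf l h1 h2, kmPerm_two_mul, kmPerm_eq]

lemma onemove_collapsing {k : ℕ} {μ μ' : ℕ → ℕ} (h : OneMove k μ μ')
    (hc : IsCollapsing k μ) : IsCollapsing k μ' := by
  obtain ⟨j, ⟨hj2, hjk1, hne, hlt⟩, hf⟩ := h
  have hjk : j + 1 ≤ k := by omega
  have hswfix : ∀ x, x ≠ j → x ≠ j + 1 → Equiv.swap j (j+1) x = x := fun x hx hx' =>
    Equiv.swap_apply_of_ne_of_ne hx hx'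
  constructor
  · have h2 : (2 : ℕ) = 2 * 1 := by omega
    rw [h2, oneMove_eq hf (le_refl 1) (by omega)]
    rw [hswfix 1 (by omega) (by omega)]
    have h3 : (2 * 1 : ℕ) = 2 := by omega
    rw [h3, hc.1]
    rw [fPerm_fix]
    rw [hswfix (1/2) (by omega) (by omega)]
  · intro l hl1 hlk
    rw [oneMove_eq hf hl1 hlk]
    by_cases hlj : l = j
    · rw [hlj, Equiv.swap_apply_left]
      have hv : μ (2*(j+1)) < 2*j := by
        have h22 : 2*(j+1) = 2*j+2 := by ring
        rw [h22]; exact hlt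
      have hv1 : 1 ≤ μ (2*(j+1)) := (hc.2 (j+1) (by omega) hjk).1
      rw [fPerm_fix (hswfix _ (by omega) (by omega))]
      omega
    by_cases hlj' : l = j + 1
    · rw [hlj', Equiv.swap_apply_right]
      have hv : μ (2*j) < 2*j := (hc.2 j (by omega) (by omega)).2
      have hv1 : 1 ≤ μ (2*j) := (hc.2 j (by omega) (by omega)).1
      rw [fPerm_fix (hswfix _ (by omega) (by omega))]
      omega
    · rw [hswfix l hlj hlj']
      have hv : 1 ≤ μ (2*l) ∧ μ (2*l) < 2*l := hc.2 l hl1 hlk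
      by_cases hd : μ (2*l) / 2 = j ∨ μ (2*l) / 2 = j + 1
      · have hge : 2*j ≤ μ (2*l) := by omega
        have hl2 : j + 2 ≤ l := by omega
        unfold fPerm
        rcases hd with hd | hd
        · rw [hd, Equiv.swap_apply_left]; omega
        · rw [hd, Equiv.swap_apply_right]; omega
      · push_neg at hd
        rw [fPerm_fix (hswfix _ hd.1 hd.2)]
        exact hv

lemma kmrel_collapsing {k : ℕ} {μ ν : ℕ → ℕ} (h : KMRel k μ ν)
    (hc : IsCollapsing k μ) : IsCollapsing k ν := by
  induction h with
  | refl => exact hc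
  | tail _ hbc ih => exact onemove_collapsing hbc ih

lemma echelon_mono {k : ℕ} {ν : ℕ → ℕ} (h : UpperEchelon k ν) :
    ∀ l l', 1 ≤ l → l ≤ l' → l' ≤ k → ν (2*l) ≤ ν (2*l') := by
  intro l l' hl1 hle
  induction l', hle using Nat.le_induction with
  | base => intro _; exact le_refl _
  | succ n hn ih =>
    intro hnk
    have h2 : ν (2*l) ≤ ν (2*n) := ih (by omega)
    have h3 : ν (2*n) ≤ ν (2*n + 2) := h n (by omega) (by omega)
    have h4 : 2*(n+1) = 2*n + 2 := by ring
    rw [h4]; omega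

/-- The lexicographic weight used to prove termination of sorting. -/
def wt (k : ℕ) (μ : ℕ → ℕ) : ℕ :=
  ∑ l ∈ Finset.Ico 1 (k+1), μ (2*l) * (2*k+1)^(k - l)

lemma geo (B : ℕ) (hB : 1 ≤ B) (n : ℕ) :
    ∑ i ∈ Finset.range n, (B-1) * B^i = B^n - 1 := by
  induction n with
  | zero => simp
  | succ n ih =>
    rw [Finset.sum_range_succ, ih]
    have h1 : 1 ≤ B^n := Nat.one_le_pow _ _ (by omega)
    have h2 : B^(n+1) = B^n * B := pow_succ B n
    have h3 : (B-1) * B^n = B * B^n - 1 * B^n := by rw [← Nat.sub_mul]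
    have h4 : B * B^n = B^n * B := by ring
    have h5 : B^n ≤ B * B^n := Nat.le_mul_of_pos_left _ (by omega)
    omega

lemma tail_sum {k j B : ℕ} (hB : 1 ≤ B) (hjk : j ≤ k) :
    ∑ l ∈ Finset.Ico (j+1) (k+1), (B-1) * B^(k-l) = B^(k-j) - 1 := by
  rw [Finset.sum_Ico_eq_sum_range]
  have hn : k + 1 - (j + 1) = k - j := by omega
  rw [hn]
  have h2 : ∀ i ∈ Finset.range (k-j), (B-1) * B^(k - (j+1+i)) = (B-1) * B^((k-j) - 1 - i) := by
    intro i hi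
    rw [Finset.mem_range] at hi
    have he : k - (j+1+i) = (k-j) - 1 - i := by omega
    rw [he]
  rw [Finset.sum_congr rfl h2]
  rw [Finset.sum_range_reflect (fun i => (B-1) * B^i) (k-j)]
  exact geo B hB (k-j)

lemma wt_lt {k j : ℕ} {μ μ' : ℕ → ℕ} (hj1 : 1 ≤ j) (hjk : j ≤ k)
    (hpre : ∀ l, 1 ≤ l → l < j → μ' (2*l) = μ (2*l))
    (hj : μ' (2*j) < μ (2*j))
    (hbound : ∀ l, 1 ≤ l → l ≤ k → μ' (2*l) < 2*l) :
    wt k μ' < wt k μ := by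
  set B := 2*k+1 with hB
  have hB1 : 1 ≤ B := by omega
  have hsplit : ∀ ν : ℕ → ℕ, ∑ l ∈ Finset.Ico 1 (k+1), ν (2*l) * B^(k-l) =
      (∑ l ∈ Finset.Ico 1 j, ν (2*l) * B^(k-l)) + ∑ l ∈ Finset.Ico j (k+1), ν (2*l) * B^(k-l) := by
    intro ν
    rw [Finset.sum_Ico_consecutive _ (by omega : 1 ≤ j) (by omega : j ≤ k+1)]
  have hsplit2 : ∀ ν : ℕ → ℕ, ∑ l ∈ Finset.Ico j (k+1), ν (2*l) * B^(k-l) =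
      ν (2*j) * B^(k-j) + ∑ l ∈ Finset.Ico (j+1) (k+1), ν (2*l) * B^(k-l) := by
    intro ν
    rw [Finset.sum_eq_sum_Ico_succ_bot (by omega : j < k+1)]
  have hpre_eq : ∑ l ∈ Finset.Ico 1 j, μ' (2*l) * B^(k-l) =
      ∑ l ∈ Finset.Ico 1 j, μ (2*l) * B^(k-l) := by
    apply Finset.sum_congr rfl
    intro l hl
    rw [Finset.mem_Ico] at hl
    rw [hpre l hl.1 hl.2]
  have htail : ∑ l ∈ Finset.Ico (j+1) (k+1), μ' (2*l) * B^(k-l) ≤ B^(k-j) - 1 := by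
    calc ∑ l ∈ Finset.Ico (j+1) (k+1), μ' (2*l) * B^(k-l)
        ≤ ∑ l ∈ Finset.Ico (j+1) (k+1), (B-1) * B^(k-l) := by
          apply Finset.sum_le_sum
          intro l hl
          rw [Finset.mem_Ico] at hl
          have := hbound l (by omega) (by omega)
          exact Nat.mul_le_mul_right _ (by omega)
      _ = B^(k-j) - 1 := tail_sum hB1 hjk
  have hx : 1 ≤ B^(k-j) := Nat.one_le_pow _ _ (by omega)
  have hmul : (μ' (2*j) + 1) * B^(k-j) ≤ μ (2*j) * B^(k-j) :=
    Nat.mul_le_mul_right _ (by omega)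
  have hexp : (μ' (2*j) + 1) * B^(k-j) = μ' (2*j) * B^(k-j) + B^(k-j) := by ring
  unfold wt
  rw [← hB, hsplit μ', hsplit μ, hsplit2 μ', hsplit2 μ, hpre_eq]
  have hfinal : μ (2*j) * B^(k-j) ≤ μ (2*j) * B^(k-j) + ∑ l ∈ Finset.Ico (j+1) (k+1), μ (2*l) * B^(k-l) :=
    Nat.le_add_right _ _
  omega

lemma exists_move {k : ℕ} {μ : ℕ → ℕ} (hc : IsCollapsing k μ) (hne : ¬ UpperEchelon k μ) :
    ∃ μ', OneMove k μ μ' ∧ IsCollapsing k μ' ∧ wt k μ' < wt k μ := by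
  unfold UpperEchelon at hne
  push_neg at hne
  obtain ⟨j, hj1, hjk1, hgt⟩ := hne
  have hj2 : 2 ≤ j := by
    by_contra h
    have hj : j = 1 := by omega
    subst hj
    have h21 : 2*1 = 2 := by omega
    rw [h21, hc.1] at hgt
    have h4 : 1 ≤ μ (2*2) := (hc.2 2 (by omega) (by omega)).1
    have h5 : 2*1+2 = 2*2 := by omega
    rw [h5] at hgt
    omega
  have hjk : j + 1 ≤ k := by omega
  have hμj : μ (2*j) < 2*j := (hc.2 j (by omega) (by omega)).2
  have hacc : Acceptable k μ j := ⟨hj2, hjk1, by omega, by omega⟩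
  set μ' := fun n => kmPerm j (μ (kmPerm j n)) with hμ'
  have hmove : OneMove k μ μ' := ⟨j, hacc, fun l _ _ => rfl⟩
  have hc' : IsCollapsing k μ' := onemove_collapsing hmove hc
  refine ⟨μ', hmove, hc', ?_⟩
  have hf : ∀ l, 1 ≤ l → l ≤ k → μ' (2*l) = kmPerm j (μ (kmPerm j (2*l))) :=
    fun l _ _ => rfl
  have hswfix : ∀ x, x ≠ j → x ≠ j + 1 → Equiv.swap j (j+1) x = x := fun x hx hx' =>
    Equiv.swap_apply_of_ne_of_ne hx hx'
  have heqj : μ' (2*j) = μ (2*j+2) := by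
    have h6 := oneMove_eq hf (by omega : 1 ≤ j) (by omega : j ≤ k)
    rw [Equiv.swap_apply_left] at h6
    have h7 : 2*(j+1) = 2*j+2 := by ring
    rw [h7] at h6
    rw [h6, fPerm_fix (hswfix _ (by omega) (by omega))]
  apply wt_lt (by omega : 1 ≤ j) (by omega : j ≤ k)
  · intro l hl1 hlj
    have h6 := oneMove_eq hf hl1 (by omega : l ≤ k)
    rw [hswfix l (by omega) (by omega)] at h6
    have hv : μ (2*l) < 2*l := (hc.2 l hl1 (by omega)).2
    rw [h6, fPerm_fix (hswfix _ (by omega) (by omega))]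
  · rw [heqj]; omega
  · intro l hl1 hlk
    exact (hc'.2 l hl1 hlk).2

lemma exists_echelon {k : ℕ} (hk : 1 ≤ k) :
    ∀ n μ, IsCollapsing k μ → wt k μ ≤ n →
      ∃ ν, IsCollapsing k ν ∧ UpperEchelon k ν ∧ KMRel k μ ν := by
  intro n
  induction n with
  | zero =>
    intro μ hc hle
    by_cases h : UpperEchelon k μ
    · exact ⟨μ, hc, h, Relation.ReflTransGen.refl⟩
    · obtain ⟨μ', _, _, hlt⟩ := exists_move hc h
      omega
  | succ n ih =>
    intro μ hc hle
    by_cases h : UpperEchelon k μ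
    · exact ⟨μ, hc, h, Relation.ReflTransGen.refl⟩
    · obtain ⟨μ', hm, hc', hlt⟩ := exists_move hc h
      obtain ⟨ν, h1, h2, h3⟩ := ih μ' hc' (by omega)
      exact ⟨ν, h1, h2, Relation.ReflTransGen.head hm h3⟩

lemma kmrel_perm {k : ℕ} {μ ν : ℕ → ℕ} (h : KMRel k μ ν) :
    ∃ π : Equiv.Perm ℕ, π 0 = 0 ∧ (∀ n, k < n → π n = n) ∧
      (∀ m, 1 ≤ m → m ≤ k → ν (2 * π m) = fPerm π (μ (2*m))) ∧
      (∀ m m', 1 ≤ m → m < m' → m' ≤ k → μ (2*m) = μ (2*m') → π m < π m') := by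
  induction h with
  | refl =>
    refine ⟨1, rfl, fun n _ => rfl, fun m _ _ => ?_, fun m m' _ h _ _ => h⟩
    simp only [Equiv.Perm.one_apply, fPerm_one]
  | @tail b c hab hbc ih =>
    obtain ⟨π, h0, hout, hrel, hord⟩ := ih
    obtain ⟨j, ⟨hj2, hjk1, hne, hlt⟩, hf⟩ := hbc
    have hjk : j + 1 ≤ k := by omega
    set τ := Equiv.swap j (j+1) with hτ
    have hswfix : ∀ x, x ≠ j → x ≠ j + 1 → τ x = x := fun x hx hx' =>
      Equiv.swap_apply_of_ne_of_ne hx hx'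
    have hπmem : ∀ m, 1 ≤ m → m ≤ k → 1 ≤ π m ∧ π m ≤ k := by
      intro m hm1 hmk
      constructor
      · by_contra h'
        have h1 : π m = 0 := by omega
        rw [← h0] at h1
        have := π.injective h1
        omega
      · by_contra h'
        push_neg at h'
        have := hout (π m) h'
        have := π.injective this
        omega
    refine ⟨τ * π, ?_, ?_, ?_, ?_⟩
    · rw [Equiv.Perm.mul_apply, h0]
      exact hswfix 0 (by omega) (by omega)
    · intro n hn
      rw [Equiv.Perm.mul_apply, hout n hn]
      exact hswfix n (by omega) (by omega)
    · intro m hm1 hmk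
      have hπm := hπmem m hm1 hmk
      have hτπm : 1 ≤ τ (π m) ∧ τ (π m) ≤ k := by
        rw [hτ]
        simp only [Equiv.swap_apply_def]
        split_ifs <;> omega
      rw [Equiv.Perm.mul_apply]
      have h6 := oneMove_eq hf hτπm.1 hτπm.2
      rw [← hτ] at h6
      rw [h6, Equiv.swap_apply_self]
      rw [hrel m hm1 hmk, fPerm_mul]
    · intro m m' hm1 hmm' hm'k hμeq
      have hπlt := hord m m' hm1 hmm' hm'k hμeq
      simp only [Equiv.Perm.mul_apply]
      apply swap_lt hπlt
      rintro ⟨hmj, hmj'⟩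
      apply hne
      have e1 : b (2 * π m) = fPerm π (μ (2*m)) := hrel m hm1 (by omega)
      have e2 : b (2 * π m') = fPerm π (μ (2*m')) := hrel m' (by omega) hm'k
      rw [hmj] at e1
      rw [hmj'] at e2
      have h7 : 2*(j+1) = 2*j+2 := by ring
      rw [h7] at e2
      rw [e1, e2, hμeq]

lemma unique_aux {k : ℕ} (ν ν' : ℕ → ℕ) (σ : Equiv.Perm ℕ) (h0 : σ 0 = 0)
    (hout : ∀ n, k < n → σ n = n)
    (hrel : ∀ l, 1 ≤ l → l ≤ k → ν' (2 * σ l) = fPerm σ (ν (2*l)))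
    (hord : ∀ l l', 1 ≤ l → l < l' → l' ≤ k → ν (2*l) = ν (2*l') → σ l < σ l')
    (hcol : ∀ l, 1 ≤ l → l ≤ k → 1 ≤ ν (2*l) ∧ ν (2*l) < 2*l)
    (hmono : ∀ l l', 1 ≤ l → l ≤ l' → l' ≤ k → ν (2*l) ≤ ν (2*l'))
    (hmono' : ∀ l l', 1 ≤ l → l ≤ l' → l' ≤ k → ν' (2*l) ≤ ν' (2*l')) :
    ∀ l, 1 ≤ l → l ≤ k → ν' (2*l) = ν (2*l) := by
  have fix : ∀ l, l ≤ k → σ l = l := by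
    intro l
    induction l using Nat.strong_induction_on with
    | _ l ih =>
      intro hlk
      rcases Nat.eq_zero_or_pos l with rfl | hl1
      · exact h0
      by_contra hne
      have hgt : l < σ l := by
        rcases lt_or_ge (σ l) l with hlt' | hge
        · have h1 : σ (σ l) = σ l := ih (σ l) hlt' (by omega)
          have := σ.injective h1
          omega
        · omega
      have hσlk : σ l ≤ k := by
        by_contra h'
        push_neg at h'
        have h1 := hout (σ l) h'
        have := σ.injective h1
        omega
      have hσm : σ (σ.symm l) = l := σ.apply_symm_apply l
      set m := σ.symm l with hm
      have hml : l < m := by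
        rcases lt_trichotomy m l with h' | h' | h'
        · have := ih m h' (by omega)
          omega
        · rw [h'] at hσm; omega
        · exact h'
      have hmk : m ≤ k := by
        by_contra h'
        push_neg at h'
        have := hout m h'
        omega
      have hfixval : ∀ v, v < 2*l → fPerm σ v = v := by
        intro v hv
        exact fPerm_fix (ih (v/2) (by omega) (by omega))
      have hbound := hcol l hl1 hlk
      have e1 : ν' (2 * σ l) = ν (2*l) := by
        rw [hrel l hl1 hlk, hfixval _ hbound.2]
      have hble : ν' (2*l) ≤ ν (2*l) := by
        rw [← e1]
        exact hmono' l (σ l) hl1 (le_of_lt hgt) hσlk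
      have e2 : ν' (2*l) = fPerm σ (ν (2*m)) := by
        have h5 := hrel m (by omega) hmk
        rw [hσm] at h5
        exact h5
      have hage : ν (2*l) ≤ ν' (2*l) := by
        by_contra h'
        push_neg at h'
        have h2l : ν' (2*l) < 2*l := by omega
        have h6 : fPerm σ (ν (2*m)) = fPerm σ (ν' (2*l)) := by
          rw [← e2, hfixval _ h2l]
        have h7 := fPerm_inj σ h6
        have h8 := hmono l m hl1 (le_of_lt hml) hmk
        omega
      have heq : ν' (2*l) = ν (2*l) := le_antisymm hble hage
      have h9 : fPerm σ (ν (2*m)) = fPerm σ (ν (2*l)) := by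
        rw [← e2, heq, hfixval _ hbound.2]
      have h10 := fPerm_inj σ h9
      have h11 := hord l m hl1 hml hmk h10.symm
      omega
  intro l h1 h2
  have h3 := hrel l h1 h2
  rw [fix l h2] at h3
  rw [h3]
  apply fPerm_fix
  apply fix
  have := (hcol l h1 h2).2
  omega

/-- Within each KM-equivalence class of collapsing maps there is
exactly one upper echelon form (unique as a function on the index set
`{2,4,…,2k}`), and the number of upper echelon forms is at most `8^k`. -/
theorem stmt_10 (k : ℕ) (hk : 1 ≤ k) :
    (∀ μ, IsCollapsing k μ → ∃ ν, IsCollapsing k ν ∧ UpperEchelon k ν ∧ KMRel k μ ν ∧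
      ∀ ν', IsCollapsing k ν' → UpperEchelon k ν' → KMRel k μ ν' →
        ∀ l, 1 ≤ l → l ≤ k → ν' (2*l) = ν (2*l)) ∧
    (EchelonSet k).Finite ∧ (EchelonSet k).ncard ≤ 8 ^ k := by
  constructor
  · intro μ hμ
    obtain ⟨ν, hcν, heν, hrν⟩ := exists_echelon hk (wt k μ) μ hμ le_rfl
    refine ⟨ν, hcν, heν, hrν, ?_⟩
    intro ν' hcν' heν' hrν' l hl1 hlk
    obtain ⟨π, hπ0, hπo, hπr, hπd⟩ := kmrel_perm hrν
    obtain ⟨π', hπ'0, hπ'o, hπ'r, hπ'd⟩ := kmrel_perm hrν'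
    have hπi0 : π.symm 0 = 0 := by
      apply π.injective
      rw [π.apply_symm_apply, hπ0]
    have hπio : ∀ n, k < n → π.symm n = n := by
      intro n hn
      apply π.injective
      rw [π.apply_symm_apply, hπo n hn]
    have hmem : ∀ l, 1 ≤ l → l ≤ k → 1 ≤ π.symm l ∧ π.symm l ≤ k := by
      intro l h1 h2
      constructor
      · by_contra h'
        have h3 : π.symm l = 0 := by omega
        have h4 := π.apply_symm_apply l
        rw [h3, hπ0] at h4
        omega
      · by_contra h'
        push_neg at h'
        have h3 := hπo (π.symm l) h'
        rw [π.apply_symm_apply] at h3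
        omega
    set σ := π' * π⁻¹ with hσ
    have hσap : ∀ x, σ x = π' (π.symm x) := fun x => rfl
    have hσ0 : σ 0 = 0 := by rw [hσap, hπi0, hπ'0]
    have hσo : ∀ n, k < n → σ n = n := by
      intro n hn
      rw [hσap, hπio n hn, hπ'o n hn]
    have hσrel : ∀ l, 1 ≤ l → l ≤ k → ν' (2 * σ l) = fPerm σ (ν (2*l)) := by
      intro l h1 h2
      obtain ⟨hm1, hmk⟩ := hmem l h1 h2
      set m := π.symm l with hm
      have hπm : π m = l := π.apply_symm_apply l
      have r1 : ν (2*l) = fPerm π (μ (2*m)) := by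
        rw [← hπm]
        exact hπr m hm1 hmk
      have r2 : ν' (2 * π' m) = fPerm π' (μ (2*m)) := hπ'r m hm1 hmk
      rw [hσap, r2, r1, fPerm_mul]
      congr 1
      ext n
      rw [Equiv.Perm.mul_apply, hσap, Equiv.symm_apply_apply]
    have hσord : ∀ l l', 1 ≤ l → l < l' → l' ≤ k → ν (2*l) = ν (2*l') → σ l < σ l' := by
      intro l l' h1 hll' hl'k hveq
      obtain ⟨hm1, hmk⟩ := hmem l h1 (by omega)
      obtain ⟨hm'1, hm'k⟩ := hmem l' (by omega) hl'k
      set m := π.symm l with hm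
      set m' := π.symm l' with hm'
      have hπm : π m = l := π.apply_symm_apply l
      have hπm' : π m' = l' := π.apply_symm_apply l'
      have r1 : ν (2*l) = fPerm π (μ (2*m)) := by rw [← hπm]; exact hπr m hm1 hmk
      have r2 : ν (2*l') = fPerm π (μ (2*m')) := by rw [← hπm']; exact hπr m' hm'1 hm'k
      have hμeq : μ (2*m) = μ (2*m') := by
        apply fPerm_inj π
        rw [← r1, ← r2, hveq]
      have hmm' : m < m' := by
        rcases lt_trichotomy m m' with h' | h' | h'
        · exact h'
        · rw [h'] at hπm; omega
        · have := hπd m' m hm'1 h' hmk hμeq.symm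
          omega
      have := hπ'd m m' hm1 hmm' hm'k hμeq
      rw [hσap, hσap]
      exact this
    exact unique_aux ν ν' σ hσ0 hσo hσrel hσord hcν.2 (echelon_mono heν) (echelon_mono heν') l hl1 hlk
  · set F : (ℕ → ℕ) → Fin k → ℕ := fun μ i => μ (2*((i : ℕ)+1)) + ((i : ℕ)+1) with hF
    set E : (ℕ → ℕ) → Finset ℕ := fun μ => Finset.image (F μ) Finset.univ with hE
    have hsm : ∀ μ ∈ EchelonSet k, StrictMono (F μ) := by
      intro μ hμ i i' hii'
      have hii : (i : ℕ) < (i' : ℕ) := hii'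
      have h1 := echelon_mono hμ.2.1 ((i : ℕ)+1) ((i' : ℕ)+1) (by omega) (by omega)
        (by have := i'.isLt; omega)
      simp only [hF]
      omega
    have hcard : ∀ μ ∈ EchelonSet k, (E μ).card = k := by
      intro μ hμ
      rw [hE]
      rw [Finset.card_image_of_injective _ (hsm μ hμ).injective, Finset.card_univ,
        Fintype.card_fin]
    have hinj : Set.InjOn E (EchelonSet k) := by
      intro μ hμ ν hν hEeq
      have hcν := hcard ν hν
      have e1 : F μ = ⇑((E ν).orderEmbOfFin hcν) := by
        apply Finset.orderEmbOfFin_unique hcν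
        · intro i
          rw [← hEeq]
          exact Finset.mem_image_of_mem _ (Finset.mem_univ i)
        · exact hsm μ hμ
      have e2 : F ν = ⇑((E ν).orderEmbOfFin hcν) := by
        apply Finset.orderEmbOfFin_unique hcν
        · intro i
          exact Finset.mem_image_of_mem _ (Finset.mem_univ i)
        · exact hsm ν hν
      have hFeq : F μ = F ν := by rw [e1, e2]
      funext n
      by_cases hn : ∃ l, 1 ≤ l ∧ l ≤ k ∧ n = 2*l
      · obtain ⟨l, hl1, hlk, rfl⟩ := hn
        have h1 := congrFun hFeq ⟨l-1, by omega⟩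
        simp only [hF] at h1
        have h2 : l - 1 + 1 = l := by omega
        rw [h2] at h1
        omega
      · rw [hμ.2.2 n hn, hν.2.2 n hn]
    have hsub : ∀ μ ∈ EchelonSet k, E μ ∈ (Finset.range (3*k)).powerset := by
      intro μ hμ
      rw [Finset.mem_powerset]
      intro x hx
      rw [hE] at hx
      obtain ⟨i, _, rfl⟩ := Finset.mem_image.1 hx
      rw [Finset.mem_range]
      have hik : (i : ℕ) + 1 ≤ k := by have := i.isLt; omega
      have hb := (hμ.1.2 ((i : ℕ)+1) (by omega) hik).2
      simp only [hF]
      omega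
    have himg : E '' (EchelonSet k) ⊆ ↑((Finset.range (3*k)).powerset) := by
      rintro _ ⟨μ, hμ, rfl⟩
      exact hsub μ hμ
    have hfin_img : (E '' EchelonSet k).Finite :=
      Set.Finite.subset (Finset.finite_toSet _) himg
    have hfin : (EchelonSet k).Finite := Set.Finite.of_finite_image hfin_img hinj
    refine ⟨hfin, ?_⟩
    calc (EchelonSet k).ncard = (E '' EchelonSet k).ncard :=
          (Set.ncard_image_of_injOn hinj).symm
      _ ≤ (((Finset.range (3*k)).powerset : Finset (Finset ℕ)) : Set (Finset ℕ)).ncard :=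
          Set.ncard_le_ncard himg (Finset.finite_toSet _)
      _ = ((Finset.range (3*k)).powerset).card := Set.ncard_coe_finset _
      _ = 2 ^ (3*k) := by rw [Finset.card_powerset, Finset.card_range]
      _ ≤ 8 ^ k := by
          rw [pow_mul]
          norm_num
end
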